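/- arXiv:0706.1483 — 7 statements merged into one kernel-verified Lean document; each statement's English description precedes it below -/
import Mathlib

section
/- The map î : ℝ^d → S_A defined by î(x) = (π((A^T)^{-n} x))_{n∈ℕ} is well defined (its values lie in S_A), is an injective additive group homomorphism, and satisfies î(A^T x) = σ_A(î(x)) for all x ∈ ℝ^d. -/
open Matrix MeasureTheory Filter Topology

noncomputable section

/-- The integer lattice ℤ^d inside ℝ^d. -/
def intLattice (d : ℕ) : AddSubgroup (Fin d → ℝ) where
  carrier := {x | ∀ i, ∃ k : ℤ, x i = (k : ℝ)}
  zero_mem' := fun i => ⟨0, by simp⟩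
  add_mem' := by
    intro x y hx hy i
    obtain ⟨a, ha⟩ := hx i
    obtain ⟨b, hb⟩ := hy i
    exact ⟨a + b, by simp [ha, hb]⟩
  neg_mem' := by
    intro x hx i
    obtain ⟨a, ha⟩ := hx i
    exact ⟨-a, by simp [ha]⟩

/-- The torus ℝ^d / ℤ^d. -/
abbrev Torus (d : ℕ) := (Fin d → ℝ) ⧸ intLattice d

/-- The quotient homomorphism π : ℝ^d → 𝕋^d. -/
def torusMk (d : ℕ) : (Fin d → ℝ) →+ Torus d := QuotientAddGroup.mk' (intLattice d)

/-- A square integer matrix is expansive if all of its complex eigenvalues `μ`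
satisfy `|μ| > 1`. -/
def Expansive {d : ℕ} (A : Matrix (Fin d) (Fin d) ℤ) : Prop :=
  ∀ μ : ℂ, (Matrix.charpoly (A.map (Int.cast : ℤ → ℂ))).IsRoot μ → 1 < ‖μ‖

/-- The real matrix associated to an integer matrix. -/
def toR {d : ℕ} (A : Matrix (Fin d) (Fin d) ℤ) : Matrix (Fin d) (Fin d) ℝ :=
  A.map (Int.cast : ℤ → ℝ)

lemma latticeMap_aux {d : ℕ} (M : Matrix (Fin d) (Fin d) ℤ) :
    intLattice d ≤ (intLattice d).comap (toR M).mulVecLin.toAddMonoidHom := by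
  intro x hx
  choose k hk using hx
  intro i
  refine ⟨∑ j, M i j * k j, ?_⟩
  have : (toR M).mulVecLin.toAddMonoidHom x i = ∑ j, (M i j : ℝ) * (k j : ℝ) := by
    simp [toR, Matrix.mulVec, dotProduct, hk, Matrix.map_apply]
  rw [this]
  push_cast
  ring

/-- The endomorphism of the torus induced by an integer matrix. -/
def torusHom {d : ℕ} (M : Matrix (Fin d) (Fin d) ℤ) : Torus d →+ Torus d :=
  QuotientAddGroup.map _ _ (toR M).mulVecLin.toAddMonoidHom (latticeMap_aux M)

/-- The solenoid `S_A`, as an additive subgroup of `(𝕋^d)^ℕ`. -/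
def solenoid {d : ℕ} (A : Matrix (Fin d) (Fin d) ℤ) : AddSubgroup (ℕ → Torus d) where
  carrier := {z | ∀ n, torusHom Aᵀ (z (n + 1)) = z n}
  zero_mem' := by intro n; simp
  add_mem' := by
    intro a b ha hb n
    simp only [Pi.add_apply, map_add, ha n, hb n]
  neg_mem' := by
    intro a ha n
    simp only [Pi.neg_apply, map_neg, ha n]

/-- The shift automorphism σ_A of the solenoid (written on the ambient space). -/
def sigmaA {d : ℕ} (A : Matrix (Fin d) (Fin d) ℤ) (z : ℕ → Torus d) : ℕ → Torus d
  | 0 => torusHom Aᵀ (z 0)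
  | n + 1 => z n

/-- The embedding î : ℝ^d → S_A, î(x) = (π((Aᵀ)^{-n} x))ₙ. -/
def ihat {d : ℕ} (A : Matrix (Fin d) (Fin d) ℤ) (x : Fin d → ℝ) : ℕ → Torus d :=
  fun n => torusMk d ((((toR A)ᵀ)⁻¹ ^ n).mulVec x)

end


section AuxProofs

open Matrix Polynomial Filter Topology
open scoped NNReal ENNReal

attribute [local instance] Matrix.linftyOpNormedAddCommGroup Matrix.linftyOpNormedRing
  Matrix.linftyOpNormedAlgebra

private lemma charpoly_eval_eq' {d : ℕ} (M : Matrix (Fin d) (Fin d) ℂ) (μ : ℂ) :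
    M.charpoly.eval μ = (μ • (1 : Matrix (Fin d) (Fin d) ℂ) - M).det := by
  rw [Matrix.charpoly, eval_det, matPolyEquiv_charmatrix]
  simp [smul_one_eq_diagonal]

private lemma spec_lt_one' {d : ℕ} (M C : Matrix (Fin d) (Fin d) ℂ) (h1 : C * M = 1)
    (hroot : ∀ μ : ℂ, ((Mᵀ).charpoly).IsRoot μ → 1 < ‖μ‖) :
    ∀ ν ∈ spectrum ℂ C, ‖ν‖₊ < 1 := by
  intro ν hν
  have hdetC : C.det * M.det = 1 := by rw [← det_mul, h1, det_one]
  have hCdet : C.det ≠ 0 := left_ne_zero_of_mul_eq_one hdetC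
  have hdet0 : (ν • (1 : Matrix (Fin d) (Fin d) ℂ) - C).det = 0 := by
    by_contra h
    rw [spectrum.mem_iff, Algebra.algebraMap_eq_smul_one] at hν
    exact hν ((isUnit_iff_isUnit_det _).mpr (isUnit_iff_ne_zero.mpr h))
  have hν0 : ν ≠ 0 := by
    rintro rfl
    rw [zero_smul, zero_sub, det_neg] at hdet0
    exact hCdet (by simpa using (mul_eq_zero.mp hdet0).resolve_left (by simp))
  have e1 : (ν • (1 : Matrix (Fin d) (Fin d) ℂ) - C) * M = ν • M - 1 := by
    rw [sub_mul, smul_mul_assoc, one_mul, h1]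
  have e0 : (ν • M - 1).det = 0 := by rw [← e1, det_mul, hdet0, zero_mul]
  have e2 : ν • M - 1 = ν • (M - ν⁻¹ • (1 : Matrix (Fin d) (Fin d) ℂ)) := by
    rw [smul_sub, smul_smul, mul_inv_cancel₀ hν0, one_smul]
  rw [e2, det_smul] at e0
  have h3 : (M - ν⁻¹ • (1 : Matrix (Fin d) (Fin d) ℂ)).det = 0 :=
    (mul_eq_zero.mp e0).resolve_left (pow_ne_zero _ hν0)
  have h4 : (ν⁻¹ • (1 : Matrix (Fin d) (Fin d) ℂ) - M).det = 0 := by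
    rw [← neg_sub, det_neg, h3, mul_zero]
  have h5 : ((Mᵀ).charpoly).IsRoot ν⁻¹ := by
    rw [IsRoot, charpoly_eval_eq',
      show ν⁻¹ • (1 : Matrix (Fin d) (Fin d) ℂ) - Mᵀ = (ν⁻¹ • (1 : Matrix (Fin d) (Fin d) ℂ) - M)ᵀ
        from by simp [transpose_sub, transpose_smul], det_transpose, h4]
  have h6 := hroot _ h5
  rw [norm_inv] at h6
  have habs : ‖ν‖ < 1 := by
    have h0 : 0 < ‖ν‖ := norm_pos_iff.mpr hν0
    have h7 : ‖ν‖ * (‖ν‖)⁻¹ = 1 := mul_inv_cancel₀ h0.ne'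
    nlinarith [mul_lt_mul_of_pos_left h6 h0]
  have : ‖ν‖ < 1 := habs
  exact_mod_cast this

private lemma pow_norm_tendsto_zero' {d : ℕ} (C : Matrix (Fin d) (Fin d) ℂ)
    (hspec : ∀ ν ∈ spectrum ℂ C, ‖ν‖₊ < 1) :
    Tendsto (fun n => ‖C ^ n‖) atTop (𝓝 0) := by
  haveI : CompleteSpace (Matrix (Fin d) (Fin d) ℂ) :=
    (by infer_instance)
  have hfin := Matrix.finite_spectrum C
  have hr : spectralRadius ℂ C < 1 := by
    have hb : spectralRadius ℂ C ≤ ↑(hfin.toFinset.sup fun ν => ‖ν‖₊) := by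
      rw [spectralRadius]
      exact iSup₂_le fun k hk =>
        ENNReal.coe_le_coe.mpr (Finset.le_sup (hfin.mem_toFinset.mpr hk))
    refine hb.trans_lt ?_
    rw [show (1 : ℝ≥0∞) = ((1 : ℝ≥0) : ℝ≥0∞) from by simp, ENNReal.coe_lt_coe]
    rw [Finset.sup_lt_iff (by norm_num : (⊥ : ℝ≥0) < 1)]
    exact fun ν hν => hspec ν (hfin.mem_toFinset.mp hν)
  obtain ⟨c, hc1, hc2⟩ := exists_between hr
  have hcne : c ≠ ⊤ := ne_top_of_lt hc2
  have gel := spectrum.pow_nnnorm_pow_one_div_tendsto_nhds_spectralRadius C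
  have hev : ∀ᶠ n : ℕ in atTop, (‖C ^ n‖₊ : ℝ≥0∞) ^ (1 / (n : ℝ)) < c :=
    gel.eventually_lt_const hc1
  have hc3 : c.toReal < 1 := by
    have := (ENNReal.toReal_lt_toReal hcne (by simp)).mpr hc2
    simpa using this
  have hbound : ∀ᶠ n : ℕ in atTop, ‖C ^ n‖ ≤ c.toReal ^ n := by
    filter_upwards [hev, eventually_ge_atTop 1] with n h hn
    have hn0 : (n : ℝ) ≠ 0 := Nat.cast_ne_zero.mpr (by omega)
    have h1 : (‖C ^ n‖₊ : ℝ≥0∞) ≤ c ^ n := by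
      calc (‖C ^ n‖₊ : ℝ≥0∞) = ((‖C ^ n‖₊ : ℝ≥0∞) ^ (1 / (n : ℝ))) ^ (n : ℝ) := by
            rw [← ENNReal.rpow_mul, one_div_mul_cancel hn0, ENNReal.rpow_one]
        _ ≤ c ^ (n : ℝ) := ENNReal.rpow_le_rpow h.le (by positivity)
        _ = c ^ n := ENNReal.rpow_natCast c n
    have h2 := ENNReal.toReal_le_toReal (by simp) (by simp [hcne]) |>.mpr h1
    simpa [ENNReal.toReal_pow] using h2
  exact squeeze_zero' (Eventually.of_forall fun n => norm_nonneg _) hbound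
    (tendsto_pow_atTop_nhds_zero_of_lt_one ENNReal.toReal_nonneg hc3)

private lemma exists_pow_mulVec_small' {d : ℕ} (C : Matrix (Fin d) (Fin d) ℂ)
    (hspec : ∀ ν ∈ spectrum ℂ C, ‖ν‖₊ < 1) (vc : Fin d → ℂ) :
    ∃ N : ℕ, ∀ i, ‖((C ^ N) *ᵥ vc) i‖ < 1 := by
  have hpow := pow_norm_tendsto_zero' C hspec
  have htend : Tendsto (fun n => ‖C ^ n‖ * ‖vc‖) atTop (𝓝 0) := by
    simpa using hpow.mul_const ‖vc‖
  obtain ⟨N, hN⟩ := (htend.eventually_lt_const (by norm_num : (0:ℝ) < 1)).exists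
  exact ⟨N, fun i =>
    lt_of_le_of_lt ((norm_le_pi_norm _ i).trans (Matrix.linfty_opNorm_mulVec _ _)) hN⟩

end AuxProofs

/-- the map î is well defined (takes values in the solenoid `S_A`),
is an injective additive group homomorphism, and satisfies î(Aᵀx) = σ_A(î(x)). -/
theorem statement0 (d : ℕ) (hd : 0 < d) (A : Matrix (Fin d) (Fin d) ℤ)
    (hA : Expansive A) :
    (∀ x : Fin d → ℝ, ihat A x ∈ solenoid A) ∧
    Function.Injective (ihat A) ∧
    (∀ x y : Fin d → ℝ, ihat A (x + y) = ihat A x + ihat A y) ∧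
    (∀ x : Fin d → ℝ, ihat A (((toR A)ᵀ).mulVec x) = sigmaA A (ihat A x)) := by
  classical
  set B := (toR A)ᵀ with hBdef
  -- determinant of A is nonzero
  have hAdet : A.det ≠ 0 := by
    intro h0
    have hN : (A.map (Int.cast : ℤ → ℂ)).det = 0 := by
      rw [show A.map (Int.cast : ℤ → ℂ) = (Int.castRingHom ℂ).mapMatrix A from rfl,
        ← RingHom.map_det]
      simp [h0]
    have hroot : (Matrix.charpoly (A.map (Int.cast : ℤ → ℂ))).IsRoot 0 := by
      have := Matrix.det_eq_sign_charpoly_coeff (A.map (Int.cast : ℤ → ℂ))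
      rw [hN] at this
      have hc : (Matrix.charpoly (A.map (Int.cast : ℤ → ℂ))).coeff 0 = 0 := by
        rcases mul_eq_zero.mp this.symm with h | h
        · exact absurd h (pow_ne_zero _ (neg_ne_zero.mpr one_ne_zero))
        · exact h
      rwa [Polynomial.coeff_zero_eq_eval_zero] at hc
    have := hA 0 hroot
    rw [norm_zero] at this
    linarith
  have hdetB : IsUnit B.det := by
    rw [hBdef, Matrix.det_transpose]
    have : (toR A).det = ((A.det : ℤ) : ℝ) := by
      rw [show toR A = (Int.castRingHom ℝ).mapMatrix A from rfl, ← RingHom.map_det]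
      rfl
    rw [this]
    exact isUnit_iff_ne_zero.mpr (by exact_mod_cast hAdet)
  have hBB : B * B⁻¹ = 1 := Matrix.mul_nonsing_inv _ hdetB
  have hB'B : B⁻¹ * B = 1 := Matrix.nonsing_inv_mul _ hdetB
  have htoR : toR Aᵀ = B := by
    rw [hBdef]
    ext i j
    simp [toR, Matrix.transpose_map, Matrix.transpose_apply, Matrix.map_apply]
  have hth : ∀ (y : Fin d → ℝ), torusHom Aᵀ (torusMk d y) = torusMk d (B *ᵥ y) := by
    intro y
    rw [← htoR]
    rfl
  refine ⟨?_, ?_, ?_, ?_⟩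
  · -- membership in the solenoid
    intro x n
    show torusHom Aᵀ (torusMk d ((B⁻¹ ^ (n + 1)) *ᵥ x)) = torusMk d ((B⁻¹ ^ n) *ᵥ x)
    rw [hth]
    congr 1
    rw [Matrix.mulVec_mulVec]
    congr 1
    rw [pow_succ', ← mul_assoc, hBB, one_mul]
  · -- injectivity
    intro x y hxy
    set v := x - y with hv
    suffices hv0 : v = 0 by
      have := sub_eq_zero.mp hv0
      exact this
    -- entries of B⁻¹ ^ n *ᵥ v are integers
    have hlat : ∀ n : ℕ, ∀ i, ∃ k : ℤ, ((B⁻¹ ^ n) *ᵥ v) i = (k : ℝ) := by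
      intro n
      have h1 : torusMk d ((B⁻¹ ^ n) *ᵥ x) = torusMk d ((B⁻¹ ^ n) *ᵥ y) := congrFun hxy n
      rw [torusMk, QuotientAddGroup.mk'_eq_mk'] at h1
      obtain ⟨z, hz, hz2⟩ := h1
      intro i
      obtain ⟨k, hk⟩ := hz i
      refine ⟨-k, ?_⟩
      have : ((B⁻¹ ^ n) *ᵥ v) i = -(z i) := by
        rw [hv, Matrix.mulVec_sub, ← hz2]
        simp
      rw [this, hk]
      push_cast
      ring
    -- pass to complex matrices
    set F : Matrix (Fin d) (Fin d) ℝ →+* Matrix (Fin d) (Fin d) ℂ :=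
      (Complex.ofRealHom : ℝ →+* ℂ).mapMatrix with hF
    set C : Matrix (Fin d) (Fin d) ℂ := F B⁻¹ with hC
    have hCM : C * F B = 1 := by rw [hC, ← _root_.map_mul F, hB'B, _root_.map_one F]
    have hFBt : (F B)ᵀ = A.map (Int.cast : ℤ → ℂ) := by
      ext i j
      simp [hF, hBdef, toR, RingHom.mapMatrix_apply, Matrix.map_apply, Matrix.transpose_apply]
    have hroot : ∀ μ : ℂ, (((F B)ᵀ).charpoly).IsRoot μ → 1 < ‖μ‖ := by
      rw [hFBt]; exact hA
    set vc : Fin d → ℂ := fun i => ((v i : ℝ) : ℂ) with hvc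
    obtain ⟨N, hN⟩ := exists_pow_mulVec_small' C (spec_lt_one' (F B) C hCM hroot) vc
    -- the N-th vector has all integer entries of norm < 1, hence is zero
    have hzero : (B⁻¹ ^ N) *ᵥ v = 0 := by
      funext i
      obtain ⟨k, hk⟩ := hlat N i
      have hentry : ((C ^ N) *ᵥ vc) i = (((((B⁻¹ ^ N)) *ᵥ v) i : ℝ) : ℂ) := by
        rw [hC, ← map_pow, hF]
        simp only [RingHom.mapMatrix_apply, Matrix.mulVec, dotProduct, Matrix.map_apply,
          hvc]
        push_cast
        rfl
      have hlt : ‖((C ^ N) *ᵥ vc) i‖ < 1 := hN i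
      rw [hentry, hk] at hlt
      have : |(k : ℝ)| < 1 := by
        rwa [Complex.norm_real, Real.norm_eq_abs] at hlt
      have hk0 : k = 0 := by
        by_contra hk0
        have : (1 : ℝ) ≤ |(k : ℝ)| := by
          rw [← Int.cast_abs]
          exact_mod_cast Int.one_le_abs (by omega)
        linarith
      rw [hk, hk0, Int.cast_zero]
      rfl
    -- conclude v = 0
    have hone : B ^ N * B⁻¹ ^ N = 1 := by
      have hcomm : Commute B B⁻¹ := by
        unfold Commute SemiconjBy
        rw [hBB, hB'B]
      rw [← hcomm.mul_pow, hBB, one_pow]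
    calc v = (B ^ N * B⁻¹ ^ N) *ᵥ v := by rw [hone, Matrix.one_mulVec]
      _ = (B ^ N) *ᵥ ((B⁻¹ ^ N) *ᵥ v) := by rw [Matrix.mulVec_mulVec]
      _ = 0 := by rw [hzero, Matrix.mulVec_zero]
  · -- additivity
    intro x y
    funext n
    show torusMk d ((B⁻¹ ^ n) *ᵥ (x + y)) = torusMk d ((B⁻¹ ^ n) *ᵥ x) + torusMk d ((B⁻¹ ^ n) *ᵥ y)
    rw [Matrix.mulVec_add, map_add]
  · -- equivariance
    intro x
    funext n
    match n with
    | 0 =>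
      show torusMk d ((B⁻¹ ^ 0) *ᵥ (B *ᵥ x)) = torusHom Aᵀ (torusMk d ((B⁻¹ ^ 0) *ᵥ x))
      rw [hth]
      simp [Matrix.one_mulVec]
    | (n + 1) =>
      show torusMk d ((B⁻¹ ^ (n + 1)) *ᵥ (B *ᵥ x)) = torusMk d ((B⁻¹ ^ n) *ᵥ x)
      congr 1
      rw [Matrix.mulVec_mulVec, pow_succ, mul_assoc, hB'B, mul_one]
end

section
/- The image î(ℝ^d) equals the set of all sequences (z_n)_{n∈ℕ} ∈ S_A such that z_n converges to 0 in 𝕋^d (with the quotient topology); that is, (z_n) ∈ S_A satisfies z_n → 0 if and only if (z_n) = î(x) for some x ∈ ℝ^d. -/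
open Matrix MeasureTheory Filter Topology

-- ===== Auxiliary lemmas =====
open Polynomial
open scoped ENNReal NNReal

section Aux

lemma pow_tendsto_zero_of_spectralRadius_lt_one {E : Type*} [NormedRing E] [NormedAlgebra ℂ E]
    [CompleteSpace E] (T : E) (h : spectralRadius ℂ T < 1) :
    Tendsto (fun n : ℕ => T ^ n) atTop (𝓝 0) := by
  obtain ⟨r, hr1, hr2⟩ := ENNReal.lt_iff_exists_nnreal_btwn.mp h
  have hg := spectrum.pow_nnnorm_pow_one_div_tendsto_nhds_spectralRadius T
  have hev : ∀ᶠ n : ℕ in atTop, (‖T ^ n‖₊ : ℝ≥0∞) ^ (1 / (n : ℝ)) < (r : ℝ≥0∞) :=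
    hg.eventually_lt_const hr1
  have hle : ∀ᶠ n : ℕ in atTop, ‖T ^ n‖ ≤ (r : ℝ) ^ n := by
    filter_upwards [hev, eventually_ge_atTop 1] with n hn hn1
    have hn0 : (n : ℝ) ≠ 0 := by positivity
    have h2 := ENNReal.rpow_lt_rpow hn (by positivity : (0:ℝ) < (n:ℝ))
    rw [← ENNReal.rpow_mul, one_div, inv_mul_cancel₀ hn0, ENNReal.rpow_one,
      ENNReal.rpow_natCast] at h2
    have h3 : (‖T ^ n‖₊ : ℝ≥0∞) ≤ ((r ^ n : ℝ≥0) : ℝ≥0∞) := by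
      rw [ENNReal.coe_pow]; exact le_of_lt h2
    have h4 : ‖T ^ n‖₊ ≤ r ^ n := by exact_mod_cast h3
    calc ‖T ^ n‖ = (‖T ^ n‖₊ : ℝ) := rfl
    _ ≤ ((r ^ n : ℝ≥0) : ℝ) := by exact_mod_cast h4
    _ = (r : ℝ) ^ n := by push_cast; ring
  have hr0 : (0 : ℝ) ≤ r := r.2
  have : Tendsto (fun n : ℕ => (r : ℝ) ^ n) atTop (𝓝 0) :=
    tendsto_pow_atTop_nhds_zero_of_lt_one hr0 (by exact_mod_cast hr2)
  rw [tendsto_zero_iff_norm_tendsto_zero]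
  exact squeeze_zero' (Eventually.of_forall fun n => norm_nonneg _) hle this

lemma spec_root {d : ℕ} (M : Matrix (Fin d) (Fin d) ℂ) (μ : ℂ)
    (h : μ ∈ spectrum ℂ M) : M.charpoly.IsRoot μ := by
  rw [spectrum.mem_iff, Matrix.isUnit_iff_isUnit_det, isUnit_iff_ne_zero, not_not] at h
  have : M.charpoly.eval μ = ((algebraMap ℂ (Matrix (Fin d) (Fin d) ℂ)) μ - M).det := by
    rw [Matrix.charpoly, ← Polynomial.coe_evalRingHom, RingHom.map_det]
    congr 1
    ext i j
    by_cases hij : i = j <;>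
      simp [hij, charmatrix_apply, Matrix.algebraMap_matrix_apply, Matrix.diagonal_apply]
  simpa [Polynomial.IsRoot, this] using h

lemma charpoly_transp {d : ℕ} (M : Matrix (Fin d) (Fin d) ℂ) : Mᵀ.charpoly = M.charpoly := by
  rw [Matrix.charpoly, Matrix.charpoly, ← Matrix.det_transpose]
  congr 1
  ext i j
  by_cases hij : i = j <;>
    simp [hij, eq_comm, charmatrix_apply, Matrix.diagonal_apply, Matrix.transpose_apply]

variable {d : ℕ} (A : Matrix (Fin d) (Fin d) ℤ)

lemma cdet_ne (hA : Expansive A) : ((A.map (Int.cast : ℤ → ℂ)).det) ≠ 0 := by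
  intro h0
  have h1 : (A.map (Int.cast : ℤ → ℂ)).charpoly.IsRoot 0 := by
    have := Matrix.det_eq_sign_charpoly_coeff (A.map (Int.cast : ℤ → ℂ))
    rw [h0] at this
    have hc : (A.map (Int.cast : ℤ → ℂ)).charpoly.coeff 0 = 0 := by
      rcases mul_eq_zero.mp this.symm with h | h
      · exact absurd h (pow_ne_zero _ (neg_ne_zero.mpr one_ne_zero))
      · exact h
    simpa [Polynomial.IsRoot, Polynomial.coeff_zero_eq_eval_zero] using hc
  have h2 := hA 0 h1
  rw [norm_zero] at h2
  exact absurd h2 (by norm_num)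

lemma rdet_ne (hA : Expansive A) : IsUnit ((toR A)ᵀ).det := by
  rw [Matrix.det_transpose, isUnit_iff_ne_zero]
  intro h0
  apply cdet_ne A hA
  have : ((toR A).map (Complex.ofRealHom : ℝ →+* ℂ)) = A.map (Int.cast : ℤ → ℂ) := by
    ext i j; simp [toR, Matrix.map_apply]
  rw [← this, ← RingHom.mapMatrix_apply, ← RingHom.map_det, h0, map_zero]

lemma mulVec_pow_inv_tendsto (hA : Expansive A) (hd : 0 < d) (x : Fin d → ℝ) :
    Tendsto (fun n : ℕ => (((toR A)ᵀ)⁻¹ ^ n) *ᵥ x) atTop (𝓝 0) := by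
  classical
  set B : Matrix (Fin d) (Fin d) ℝ := (toR A)ᵀ with hB
  have hdet : IsUnit B.det := rdet_ne A hA
  set C : Matrix (Fin d) (Fin d) ℂ := (A.map (Int.cast : ℤ → ℂ))ᵀ with hC
  have hmap : B.map (Complex.ofRealHom : ℝ →+* ℂ) = C := by
    ext i j; simp [hB, hC, toR, Matrix.map_apply]
  set Bc : Matrix (Fin d) (Fin d) ℂ := B⁻¹.map (Complex.ofRealHom : ℝ →+* ℂ) with hBc
  have hBcC : Bc * C = 1 := by
    rw [← hmap, hBc, ← RingHom.mapMatrix_apply, ← RingHom.mapMatrix_apply, ← _root_.map_mul,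
      Matrix.nonsing_inv_mul B hdet, _root_.map_one]
  have hCdet : IsUnit C.det := by
    rw [hC, Matrix.det_transpose, isUnit_iff_ne_zero]; exact cdet_ne A hA
  have hCinv : C⁻¹ = Bc := Matrix.inv_eq_left_inv hBcC
  -- spectrum of Bc is inside the open unit disc
  have hspec : ∀ μ ∈ spectrum ℂ Bc, ‖μ‖₊ < 1 := by
    intro μ hμ
    letI := Matrix.invertibleOfIsUnitDet C hCdet
    set u : (Matrix (Fin d) (Fin d) ℂ)ˣ := unitOfInvertible C with hu
    have huinv : ((u⁻¹ : _ˣ) : Matrix (Fin d) (Fin d) ℂ) = Bc := by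
      rw [← hCinv, ← Matrix.invOf_eq_nonsing_inv C]; rfl
    have hμ0 : μ ≠ 0 := by
      intro h0
      rw [h0] at hμ
      exact ((spectrum.zero_mem_iff (R := ℂ)).mp hμ) (by rw [← huinv]; exact Units.isUnit _)
    lift μ to ℂˣ using isUnit_iff_ne_zero.mpr hμ0 with μu
    have h1 : (μu : ℂ) ∈ spectrum ℂ ((u⁻¹ : _ˣ) : Matrix (Fin d) (Fin d) ℂ) := by
      rw [huinv]; exact hμ
    have h2 := spectrum.inv_mem_iff.mp h1
    rw [inv_inv] at h2
    have h3 : ((μu⁻¹ : ℂˣ) : ℂ) ∈ spectrum ℂ C := h2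
    have h4 := spec_root C _ h3
    rw [show C = (A.map (Int.cast : ℤ → ℂ))ᵀ from rfl, charpoly_transp] at h4
    have h5 := hA _ h4
    have h6 : ‖((μu⁻¹ : ℂˣ) : ℂ)‖ = ‖(μu : ℂ)‖⁻¹ := by
      rw [← norm_inv]; congr 1; simp
    rw [h6] at h5
    have habs : 0 < ‖(μu : ℂ)‖ := by
      simpa using norm_pos_iff.mpr (Units.ne_zero μu)
    have : ‖(μu : ℂ)‖ < 1 := ((one_lt_inv_iff₀).mp h5).2
    rw [← NNReal.coe_lt_coe]
    simpa [coe_nnnorm] using this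
  -- operator side
  haveI : Nonempty (Fin d) := ⟨⟨0, hd⟩⟩
  haveI : Nontrivial (EuclideanSpace ℂ (Fin d)) := by
    refine ⟨0, (WithLp.equiv 2 (Fin d → ℂ)).symm (fun _ => 1), fun h => ?_⟩
    have := congrFun (congrArg (WithLp.equiv 2 (Fin d → ℂ)) h) ⟨0, hd⟩
    simp at this
  set T := Matrix.toEuclideanCLM (𝕜 := ℂ) Bc with hT
  have hspecT : spectrum ℂ T = spectrum ℂ Bc := AlgEquiv.spectrum_eq _ _
  have hne : (spectrum ℂ T).Nonempty := spectrum.nonempty T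
  have hrad : spectralRadius ℂ T < 1 := by
    have h1 := spectrum.spectralRadius_lt_of_forall_lt_of_nonempty hne
      (r := 1) (fun k hk => hspec k (hspecT ▸ hk))
    simpa using h1
  have hTn : Tendsto (fun n : ℕ => T ^ n) atTop (𝓝 0) :=
    pow_tendsto_zero_of_spectralRadius_lt_one T hrad
  set xc : Fin d → ℂ := fun i => (x i : ℂ) with hxc
  set v := (WithLp.equiv 2 (Fin d → ℂ)).symm xc with hv
  have hTv : Tendsto (fun n : ℕ => (T ^ n) v) atTop (𝓝 0) := by
    rw [tendsto_zero_iff_norm_tendsto_zero]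
    refine squeeze_zero (fun n => norm_nonneg _) (fun n => (T ^ n).le_opNorm v) ?_
    have hn0 : Tendsto (fun n : ℕ => ‖T ^ n‖) atTop (𝓝 0) := by
      simpa using hTn.norm
    simpa using hn0.mul_const ‖v‖
  have key : ∀ n : ℕ, (T ^ n) v = (WithLp.equiv 2 (Fin d → ℂ)).symm ((Bc ^ n) *ᵥ xc) := by
    intro n
    rw [hT, ← _root_.map_pow, hv]; rfl
  rw [tendsto_pi_nhds]
  intro j
  have hcont : Continuous fun u : EuclideanSpace ℂ (Fin d) => (WithLp.equiv 2 (Fin d → ℂ)) u j :=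
    (continuous_apply j).comp (PiLp.continuous_ofLp (p := 2) (β := fun _ : Fin d => ℂ))
  have hcoordC : Tendsto (fun n : ℕ => ((Bc ^ n) *ᵥ xc) j) atTop (𝓝 0) := by
    have h2 := (hcont.tendsto 0).comp hTv
    simpa [key, Function.comp_def] using h2
  have hre : ∀ n : ℕ, ((B⁻¹ ^ n) *ᵥ x) j = (((Bc ^ n) *ᵥ xc) j).re := by
    intro n
    have hpow : Bc ^ n = (B⁻¹ ^ n).map (Complex.ofRealHom : ℝ →+* ℂ) := by
      rw [hBc, ← RingHom.mapMatrix_apply, ← RingHom.mapMatrix_apply, ← _root_.map_pow]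
    have h3 : (((B⁻¹ ^ n).map (Complex.ofRealHom : ℝ →+* ℂ)) *ᵥ xc) j
        = (((B⁻¹ ^ n) *ᵥ x) j : ℝ) := by
      simp only [Matrix.mulVec, dotProduct, Matrix.map_apply, hxc]
      push_cast
      rfl
    rw [hpow, h3, Complex.ofReal_re]
  have h4 := (Complex.continuous_re.tendsto 0).comp hcoordC
  simp only [Function.comp_def] at h4
  simp only [hre]
  simpa using h4

end Aux
/-- the image of î is exactly the set of elements of the solenoid
whose entries converge to 0 in the torus. -/
theorem statement1 (d : ℕ) (hd : 0 < d) (A : Matrix (Fin d) (Fin d) ℤ)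
    (hA : Expansive A) (z : ℕ → Torus d) (hz : z ∈ solenoid A) :
    Filter.Tendsto z Filter.atTop (nhds (0 : Torus d)) ↔
      ∃ x : Fin d → ℝ, ihat A x = z := by
  classical
  set B : Matrix (Fin d) (Fin d) ℝ := (toR A)ᵀ with hBdef
  have hdet : IsUnit B.det := rdet_ne A hA
  have hmk_cont : Continuous (torusMk d) := by
    rw [show ⇑(torusMk d) = (QuotientAddGroup.mk : (Fin d → ℝ) → Torus d) from
      QuotientAddGroup.coe_mk' _]
    exact continuous_quotient_mk'
  have htoRB : toR Aᵀ = B := by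
    ext i j; simp [toR, hBdef, Matrix.transpose_apply, Matrix.map_apply]
  have hhom : ∀ w : Fin d → ℝ, torusHom Aᵀ (torusMk d w) = torusMk d (B *ᵥ w) := by
    intro w
    simp only [torusHom, torusMk, QuotientAddGroup.coe_mk', QuotientAddGroup.map_mk,
      LinearMap.toAddMonoidHom_coe, Matrix.mulVecLin_apply, htoRB]
  constructor
  · intro hzt
    set r : Torus d → (Fin d → ℝ) := fun w i => Int.fract ((Quotient.out w) i + 2⁻¹) - 2⁻¹
      with hrdef
    have hrep : ∀ w : Torus d, torusMk d (r w) = w := by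
      intro w
      have heq : torusMk d (r w) = torusMk d (Quotient.out w) := by
        simp only [torusMk, QuotientAddGroup.coe_mk']
        rw [QuotientAddGroup.eq]
        intro i
        refine ⟨⌊(Quotient.out w) i + 2⁻¹⌋, ?_⟩
        simp only [Pi.add_apply, Pi.neg_apply, hrdef, Int.fract]
        ring
      rw [heq]
      exact QuotientAddGroup.out_eq' w
    have hrb : ∀ (w : Torus d) (i : Fin d), -2⁻¹ ≤ r w i ∧ r w i < 2⁻¹ := by
      intro w i
      constructor
      · have h := Int.fract_nonneg ((Quotient.out w) i + 2⁻¹)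
        simp only [hrdef]; linarith
      · have h := Int.fract_lt_one ((Quotient.out w) i + 2⁻¹)
        simp only [hrdef]; linarith
    have hrabs : ∀ (w : Torus d) (i : Fin d), |r w i| ≤ 2⁻¹ := fun w i =>
      abs_le.mpr ⟨(hrb w i).1, le_of_lt (hrb w i).2⟩
    have hxtend : Tendsto (fun n => r (z n)) atTop (𝓝 0) := by
      rw [NormedAddCommGroup.tendsto_nhds_zero]
      intro ε hε
      set ε' := min ε 2⁻¹ with hε'def
      have hε' : (0:ℝ) < ε' := lt_min hε (by norm_num)
      have hε'le : ε' ≤ 2⁻¹ := min_le_right _ _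
      have hUopen : IsOpen (torusMk d '' Metric.ball 0 ε') := by
        have h1 := QuotientAddGroup.isOpenMap_coe (N := intLattice d) _
          (Metric.isOpen_ball (x := (0 : Fin d → ℝ)) (ε := ε'))
        have h2 : ⇑(torusMk d) = (QuotientAddGroup.mk : (Fin d → ℝ) → Torus d) :=
          QuotientAddGroup.coe_mk' _
        rw [h2]
        exact h1
      have hU0 : (0 : Torus d) ∈ torusMk d '' Metric.ball 0 ε' :=
        ⟨0, Metric.mem_ball_self hε', map_zero _⟩
      filter_upwards [hzt.eventually_mem (hUopen.mem_nhds hU0)] with n hn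
      obtain ⟨v, hv, hveq⟩ := hn
      rw [mem_ball_zero_iff] at hv
      have hcoord : ∀ i, |r (z n) i| < ε' := by
        intro i
        have heq2 : torusMk d (r (z n)) = torusMk d v := by rw [hrep, hveq]
        have hmem : -(r (z n)) + v ∈ intLattice d := by
          apply (QuotientAddGroup.eq (s := intLattice d)).mp
          simpa only [torusMk, QuotientAddGroup.coe_mk'] using heq2
        obtain ⟨k, hk⟩ := hmem i
        have hvi : |v i| < ε' := by
          have := norm_le_pi_norm v i
          rw [Real.norm_eq_abs] at this
          exact lt_of_le_of_lt this hv
        have hki : -(r (z n) i) + v i = (k : ℝ) := by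
          simpa only [Pi.add_apply, Pi.neg_apply] using hk
        have hkabs : |(k : ℝ)| < 1 := by
          rw [← hki, neg_add_eq_sub]
          calc |v i - r (z n) i| ≤ |v i| + |r (z n) i| := abs_sub _ _
          _ < ε' + 2⁻¹ := by
              have := hrabs (z n) i
              have h3 : |r (z n) i| < 2⁻¹ ∨ |r (z n) i| = 2⁻¹ := lt_or_eq_of_le this
              rcases h3 with h3 | h3 <;> [linarith; linarith]
          _ ≤ 1 := by linarith
        have hk0 : k = 0 := Int.abs_lt_one_iff.mp (by exact_mod_cast hkabs)
        rw [hk0] at hki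
        have : r (z n) i = v i := by push_cast at hki; linarith
        rw [this]; exact hvi
      have : ‖r (z n)‖ < ε' := by
        rw [pi_norm_lt_iff hε']
        intro i
        rw [Real.norm_eq_abs]
        exact hcoord i
      exact lt_of_lt_of_le this (min_le_left _ _)
    -- the lattice relation coming from membership in the solenoid
    have hlatrel : ∀ n, -(B *ᵥ r (z (n+1))) + r (z n) ∈ intLattice d := by
      intro n
      apply (QuotientAddGroup.eq (s := intLattice d)).mp
      have h1 : torusMk d (B *ᵥ r (z (n+1))) = torusMk d (r (z n)) := by
        rw [← hhom, hrep, hrep]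
        exact hz n
      simpa only [torusMk, QuotientAddGroup.coe_mk'] using h1
    have hmulcont : Continuous fun w : Fin d → ℝ => B *ᵥ w := by
      have h1 := LinearMap.continuous_of_finiteDimensional (𝕜 := ℝ) B.mulVecLin
      exact h1
    have hd1 : Tendsto (fun n => B *ᵥ r (z (n+1))) atTop (𝓝 0) := by
      have hshift : Tendsto (fun n => r (z (n+1))) atTop (𝓝 0) :=
        hxtend.comp (tendsto_add_atTop_nat 1)
      have h2 := (hmulcont.tendsto 0).comp hshift
      simpa [Function.comp_def, Matrix.mulVec_zero] using h2
    have hdiff : Tendsto (fun n => -(B *ᵥ r (z (n+1))) + r (z n)) atTop (𝓝 0) := by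
      simpa using (hd1.neg).add hxtend
    have hev1 : ∀ᶠ n in atTop, -(B *ᵥ r (z (n+1))) + r (z n) = 0 := by
      filter_upwards [(NormedAddCommGroup.tendsto_nhds_zero.mp hdiff) 1 one_pos] with n hn
      funext i
      obtain ⟨k, hk⟩ := hlatrel n i
      have h2 : |(k:ℝ)| < 1 := by
        rw [← hk]
        have := norm_le_pi_norm (-(B *ᵥ r (z (n+1))) + r (z n)) i
        rw [Real.norm_eq_abs] at this
        exact lt_of_le_of_lt this hn
      have hk0 : k = 0 := Int.abs_lt_one_iff.mp (by exact_mod_cast h2)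
      rw [hk0] at hk
      simpa using hk
    obtain ⟨N, hN⟩ := eventually_atTop.mp hev1
    have hrel : ∀ n, N ≤ n → B *ᵥ r (z (n+1)) = r (z n) := by
      intro n hn
      have := hN n hn
      have h2 : r (z n) = B *ᵥ r (z (n+1)) := by
        have := neg_add_eq_zero.mp this
        exact this.symm
      exact h2.symm
    have hBB : B⁻¹ * B = 1 := Matrix.nonsing_inv_mul B hdet
    have hBB' : B * B⁻¹ = 1 := Matrix.mul_nonsing_inv B hdet
    have hlinv : ∀ m : ℕ, B⁻¹ ^ m * B ^ m = 1 := by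
      intro m
      induction m with
      | zero => simp
      | succ k ih =>
        rw [pow_succ B⁻¹ k, pow_succ' B k, mul_assoc, ← mul_assoc B⁻¹ B (B ^ k), hBB,
          one_mul, ih]
    have hBpow : ∀ (m : ℕ) (y : Fin d → ℝ), B *ᵥ (B⁻¹ ^ (m+1) *ᵥ y) = B⁻¹ ^ m *ᵥ y := by
      intro m y
      rw [Matrix.mulVec_mulVec, pow_succ' B⁻¹ m, ← mul_assoc, hBB', one_mul]
    set x : Fin d → ℝ := B ^ N *ᵥ r (z N) with hxdef
    clear_value x
    have claim1 : ∀ k : ℕ, B⁻¹ ^ (N + k) *ᵥ x = r (z (N + k)) := by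
      intro k
      induction k with
      | zero =>
        rw [Nat.add_zero, hxdef, Matrix.mulVec_mulVec, hlinv N, Matrix.one_mulVec]
      | succ k ih =>
        show B⁻¹ ^ (N + k + 1) *ᵥ x = r (z (N + k + 1))
        have e1 : B⁻¹ ^ (N + k + 1) *ᵥ x = B⁻¹ *ᵥ (B⁻¹ ^ (N + k) *ᵥ x) := by
          rw [Matrix.mulVec_mulVec, ← pow_succ' B⁻¹ (N + k)]
        rw [e1, ih, ← hrel (N + k) (Nat.le_add_right N k), Matrix.mulVec_mulVec, hBB,
          Matrix.one_mulVec]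
    have hdown : ∀ m : ℕ, torusMk d (B⁻¹ ^ (m+1) *ᵥ x) = z (m+1) →
        torusMk d (B⁻¹ ^ m *ᵥ x) = z m := by
      intro m hm
      rw [← hBpow m x, ← hhom, hm]
      exact hz m
    have hupper : ∀ n, N ≤ n → torusMk d (B⁻¹ ^ n *ᵥ x) = z n := by
      intro n hn
      obtain ⟨k, rfl⟩ := Nat.exists_eq_add_of_le hn
      rw [claim1 k, hrep]
    have hall : ∀ n, torusMk d (B⁻¹ ^ n *ᵥ x) = z n := by
      intro n
      rcases le_or_gt N n with h | h
      · exact hupper n h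
      · have key : ∀ j : ℕ, torusMk d (B⁻¹ ^ (N - j) *ᵥ x) = z (N - j) := by
          intro j
          induction j with
          | zero => simpa using hupper N le_rfl
          | succ k ih =>
            by_cases hc : N ≤ k
            · have e1 : N - (k+1) = 0 := by omega
              have e2 : N - k = 0 := by omega
              rw [e1]; rw [e2] at ih; exact ih
            · have e : N - k = (N - (k+1)) + 1 := by omega
              rw [e] at ih
              exact hdown _ ih
        have e : N - (N - n) = n := by omega
        have h3 := key (N - n)
        rwa [e] at h3
    exact ⟨x, funext fun n => hall n⟩
  · rintro ⟨x, rfl⟩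
    have h1 := mulVec_pow_inv_tendsto A hA hd x
    have h2 := (hmk_cont.tendsto 0).comp h1
    rw [show (0 : Torus d) = torusMk d 0 from (map_zero _).symm]
    exact h2
end

section
/- Let vol denote Lebesgue measure on ℝ^d and let μ̃ be the pushforward measure of vol under î (a Borel measure on S_A, where S_A carries the subspace topology from the product topology on (𝕋^d)^ℕ). Then the pushforward of μ̃ under σ_A equals |det A|^{-1}·μ̃; equivalently, ∫ f∘σ_A dμ̃ = |det A|^{-1} ∫ f dμ̃ for every Borel measurable f ≥ 0 on S_A. -/
open Matrix MeasureTheory Filter Topology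

section aux

open Matrix MeasureTheory
open scoped ENNReal

lemma det_ne_zero_of_expansive {d : ℕ} (A : Matrix (Fin d) (Fin d) ℤ)
    (hA : Expansive A) : A.det ≠ 0 := by
  intro h
  have hc : ((A.map (Int.cast : ℤ → ℂ)).det : ℂ) = 0 := by
    have h2 : (A.map (Int.cast : ℤ → ℂ)).det = ((A.det : ℂ)) :=
      (RingHom.map_det (Int.castRingHom ℂ) A).symm
    rw [h2, h]; simp
  have hroot : (Matrix.charpoly (A.map (Int.cast : ℤ → ℂ))).IsRoot 0 := by
    have := Matrix.det_eq_sign_charpoly_coeff (A.map (Int.cast : ℤ → ℂ))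
    rw [hc] at this
    have hcoeff : (Matrix.charpoly (A.map (Int.cast : ℤ → ℂ))).coeff 0 = 0 := by
      rcases mul_eq_zero.mp this.symm with h1 | h1
      · exact absurd h1 (pow_ne_zero _ (neg_ne_zero.mpr one_ne_zero))
      · exact h1
    simpa [Polynomial.IsRoot, ← Polynomial.coeff_zero_eq_eval_zero] using hcoeff
  have := hA 0 hroot
  rw [norm_zero] at this
  exact absurd this (by norm_num)

lemma continuous_torusMk (d : ℕ) : Continuous (torusMk d) :=
  continuous_quot_mk

lemma continuous_torusHom {d : ℕ} (M : Matrix (Fin d) (Fin d) ℤ) :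
    Continuous (torusHom M) := by
  rw [(QuotientAddGroup.isQuotientMap_mk (intLattice d)).continuous_iff]
  have : (torusHom M) ∘ (QuotientAddGroup.mk : (Fin d → ℝ) → Torus d)
      = (torusMk d) ∘ (toR M).mulVecLin := by
    funext x
    exact QuotientAddGroup.map_mk' _ _ _ (latticeMap_aux M) x
  rw [this]
  exact (continuous_torusMk d).comp (toR M).mulVecLin.continuous_of_finiteDimensional

lemma continuous_ihat {d : ℕ} (A : Matrix (Fin d) (Fin d) ℤ) :
    Continuous (ihat A) := by
  refine continuous_pi fun n => ?_
  exact (continuous_torusMk d).comp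
    ((((toR A)ᵀ)⁻¹ ^ n).mulVecLin).continuous_of_finiteDimensional

lemma continuous_sigmaA {d : ℕ} (A : Matrix (Fin d) (Fin d) ℤ) :
    Continuous (sigmaA A) := by
  refine continuous_pi fun n => ?_
  cases n with
  | zero => exact (continuous_torusHom Aᵀ).comp (continuous_apply 0)
  | succ n => exact continuous_apply n

lemma sigmaA_comp_ihat {d : ℕ} (A : Matrix (Fin d) (Fin d) ℤ)
    (hdet : A.det ≠ 0) :
    sigmaA A ∘ ihat A = ihat A ∘ ((toR A)ᵀ).mulVecLin := by
  have hdetR : ((toR A)ᵀ).det ≠ 0 := by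
    rw [Matrix.det_transpose]
    have : (toR A).det = ((A.det : ℝ)) := (RingHom.map_det (Int.castRingHom ℝ) A).symm
    rw [this]
    exact_mod_cast hdet
  have hBinv : ((toR A)ᵀ)⁻¹ * (toR A)ᵀ = 1 :=
    Matrix.nonsing_inv_mul _ (isUnit_iff_ne_zero.mpr hdetR)
  have htr : toR Aᵀ = (toR A)ᵀ := by
    ext i j; simp [toR, Matrix.transpose_apply, Matrix.map_apply]
  funext x
  funext n
  cases n with
  | zero =>
      show torusHom Aᵀ (ihat A x 0) = ihat A (((toR A)ᵀ).mulVec x) 0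
      have h0 : ihat A x 0 = torusMk d x := by
        simp [ihat, Matrix.one_mulVec]
      rw [h0]
      have := QuotientAddGroup.map_mk' _ _ _ (latticeMap_aux Aᵀ) x
      show torusHom Aᵀ (torusMk d x) = torusMk d ((((toR A)ᵀ)⁻¹ ^ 0).mulVec (((toR A)ᵀ).mulVec x))
      rw [pow_zero, Matrix.one_mulVec]
      calc torusHom Aᵀ (torusMk d x) = torusMk d ((toR Aᵀ).mulVecLin x) := this
        _ = torusMk d (((toR A)ᵀ).mulVec x) := by rw [htr]; rfl
  | succ n =>
      show ihat A x n = ihat A (((toR A)ᵀ).mulVec x) (n + 1)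
      unfold ihat
      congr 1
      rw [Matrix.mulVec_mulVec, pow_succ, mul_assoc, hBinv, mul_one]

end aux

open scoped ENNReal

/-- the pushforward μ̃ of Lebesgue measure under î satisfies
(σ_A)_* μ̃ = |det A|⁻¹ · μ̃; equivalently ∫ f∘σ_A dμ̃ = |det A|⁻¹ ∫ f dμ̃ for
every Borel measurable f ≥ 0. -/
theorem statement2 (d : ℕ) (hd : 0 < d) (A : Matrix (Fin d) (Fin d) ℤ)
    (hA : Expansive A) :
    letI : MeasurableSpace (ℕ → Torus d) := borel (ℕ → Torus d)
    (Measure.map (sigmaA A) (Measure.map (ihat A) (volume : Measure (Fin d → ℝ)))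
        = ((A.det.natAbs : ℝ≥0∞))⁻¹ • Measure.map (ihat A) (volume : Measure (Fin d → ℝ))) ∧
      ∀ f : (ℕ → Torus d) → ℝ≥0∞, Measurable f →
        ∫⁻ z, f (sigmaA A z) ∂(Measure.map (ihat A) (volume : Measure (Fin d → ℝ)))
          = ((A.det.natAbs : ℝ≥0∞))⁻¹ *
              ∫⁻ z, f z ∂(Measure.map (ihat A) (volume : Measure (Fin d → ℝ))) := by
  letI : MeasurableSpace (ℕ → Torus d) := borel (ℕ → Torus d)
  haveI : BorelSpace (ℕ → Torus d) := ⟨rfl⟩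
  have hdet : A.det ≠ 0 := det_ne_zero_of_expansive A hA
  have hdetR : ((A.det : ℝ)) ≠ 0 := by exact_mod_cast hdet
  have hmih : Measurable (ihat A) := (continuous_ihat A).measurable
  have hmσ : Measurable (sigmaA A) := (continuous_sigmaA A).measurable
  have hdetLin : LinearMap.det ((toR A)ᵀ).mulVecLin = ((A.det : ℝ)) := by
    have h2 : (toR A).det = ((A.det : ℝ)) := (RingHom.map_det (Int.castRingHom ℝ) A).symm
    rw [← Matrix.toLin'_apply', LinearMap.det_toLin', Matrix.det_transpose, h2]
  have hconst : ENNReal.ofReal |((A.det : ℝ))⁻¹| = ((A.det.natAbs : ℝ≥0∞))⁻¹ := by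
    have h1 : (0:ℝ) < (A.det.natAbs : ℝ) := by
      have := Int.natAbs_pos.mpr hdet
      positivity
    rw [abs_inv, ← Int.cast_abs, Int.abs_eq_natAbs, Int.cast_natCast,
      ENNReal.ofReal_inv_of_pos h1, ENNReal.ofReal_natCast]
  have key : Measure.map (sigmaA A) (Measure.map (ihat A) (volume : Measure (Fin d → ℝ)))
      = ((A.det.natAbs : ℝ≥0∞))⁻¹ • Measure.map (ihat A) (volume : Measure (Fin d → ℝ)) := by
    rw [Measure.map_map hmσ hmih, sigmaA_comp_ihat A hdet,
      ← Measure.map_map hmih (((toR A)ᵀ).mulVecLin).continuous_of_finiteDimensional.measurable,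
      Measure.map_linearMap_addHaar_eq_smul_addHaar _ (by rw [hdetLin]; exact hdetR),
      hdetLin, hconst, Measure.map_smul]
  refine ⟨key, fun f hf => ?_⟩
  rw [← lintegral_map hf hmσ, key, lintegral_smul_measure, smul_eq_mul]
end

section
/- Let C = (ζ_0, …, ζ_{p−1}) be a cycle of length p in 𝕋^d with the ζ_j pairwise distinct. Then a point (z_n)_{n∈ℕ} ∈ S_A belongs to S_A(C) if and only if dist(z_n, {ζ_0,…,ζ_{p−1}}) → 0 as n → ∞. -/
open Matrix MeasureTheory Filter Topology

/-- The quotient metric on the torus: dist(πx, πy) = inf { ‖x − y − k‖ : k ∈ ℤ^d }. -/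
noncomputable def torusDist (d : ℕ) (z w : Torus d) : ℝ :=
  sInf {r : ℝ | ∃ x y : Fin d → ℝ, torusMk d x = z ∧ torusMk d y = w ∧ ‖x - y‖ = r}

/-- The set S_A(C) = ⋃_{j} (σ_A^{-j}(χ_C) + î(ℝ^d)), where χ_C is the p-periodic
sequence determined by the cycle ζ and σ_A^{-j} is the j-fold left shift. -/
def cycleCoset {d : ℕ} (p : ℕ) (A : Matrix (Fin d) (Fin d) ℤ)
    (ζ : ZMod p → Torus d) : Set (ℕ → Torus d) :=
  ⋃ j : ZMod p, Set.range fun x : Fin d → ℝ =>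
    (fun n : ℕ => ζ ((n : ZMod p) + j)) + ihat A x

section TorusDistAux

variable {d : ℕ}

lemma torusMk_surjective : Function.Surjective (torusMk d) :=
  QuotientAddGroup.mk'_surjective _

lemma torusMk_eq_zero_iff {x : Fin d → ℝ} : torusMk d x = 0 ↔ x ∈ intLattice d :=
  QuotientAddGroup.eq_zero_iff x

lemma torusMk_eq_iff {x y : Fin d → ℝ} : torusMk d x = torusMk d y ↔ x - y ∈ intLattice d := by
  rw [← sub_eq_zero, ← map_sub, torusMk_eq_zero_iff]

lemma intLattice_eq_zero_of_norm_lt_one {x : Fin d → ℝ} (hx : x ∈ intLattice d)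
    (h : ‖x‖ < 1) : x = 0 := by
  funext i
  obtain ⟨k, hk⟩ := hx i
  have h1 : ‖x i‖ ≤ ‖x‖ := norm_le_pi_norm x i
  have h2 : |(k : ℝ)| < 1 := by rw [← Real.norm_eq_abs, ← hk]; exact h1.trans_lt h
  have h3 : |k| < 1 := by exact_mod_cast h2
  have : k = 0 := Int.abs_lt_one_iff.mp h3
  simp [hk, this]

/-- The defining set for `torusDist`. -/
lemma torusDist_set_nonempty (z w : Torus d) :
    {r : ℝ | ∃ x y : Fin d → ℝ, torusMk d x = z ∧ torusMk d y = w ∧ ‖x - y‖ = r}.Nonempty := by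
  obtain ⟨x, hx⟩ := torusMk_surjective (d := d) z
  obtain ⟨y, hy⟩ := torusMk_surjective (d := d) w
  exact ⟨‖x - y‖, x, y, hx, hy, rfl⟩

lemma torusDist_set_bddBelow (z w : Torus d) :
    BddBelow {r : ℝ | ∃ x y : Fin d → ℝ, torusMk d x = z ∧ torusMk d y = w ∧ ‖x - y‖ = r} :=
  ⟨0, by rintro r ⟨x, y, -, -, rfl⟩; positivity⟩

lemma torusDist_nonneg (z w : Torus d) : 0 ≤ torusDist d z w :=
  le_csInf (torusDist_set_nonempty z w) (by rintro r ⟨x, y, -, -, rfl⟩; positivity)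

lemma torusDist_le (x y : Fin d → ℝ) : torusDist d (torusMk d x) (torusMk d y) ≤ ‖x - y‖ :=
  csInf_le (torusDist_set_bddBelow _ _) ⟨x, y, rfl, rfl, rfl⟩

lemma exists_lift_lt {z w : Torus d} {ε : ℝ} (h : torusDist d z w < ε) :
    ∃ x y : Fin d → ℝ, torusMk d x = z ∧ torusMk d y = w ∧ ‖x - y‖ < ε := by
  obtain ⟨r, ⟨x, y, hx, hy, rfl⟩, hr⟩ := exists_lt_of_csInf_lt (torusDist_set_nonempty z w) h
  exact ⟨x, y, hx, hy, hr⟩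

lemma torusDist_symm (z w : Torus d) : torusDist d z w = torusDist d w z := by
  unfold torusDist
  congr 1
  ext r
  constructor
  · rintro ⟨x, y, hx, hy, rfl⟩; exact ⟨y, x, hy, hx, norm_sub_rev _ _⟩
  · rintro ⟨x, y, hx, hy, rfl⟩; exact ⟨y, x, hy, hx, norm_sub_rev _ _⟩

lemma eq_of_forall_torusDist_lt {z w : Torus d} (h : ∀ ε > 0, torusDist d z w < ε) :
    z = w := by
  obtain ⟨x0, hx0⟩ := torusMk_surjective (d := d) z
  obtain ⟨y0, hy0⟩ := torusMk_surjective (d := d) w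
  set c : Fin d → ℝ := x0 - y0 with hc
  set r : Fin d → ℝ := fun i => ((round (c i) : ℤ) : ℝ) with hrdef
  have hrmem : r ∈ intLattice d := fun i => ⟨round (c i), rfl⟩
  have key : ∀ ε : ℝ, 0 < ε → ε < 1/2 → ‖c - r‖ < ε := by
    intro ε hε hε2
    obtain ⟨x, y, hx, hy, hxy⟩ := exists_lift_lt (h ε hε)
    have hk : (x0 - y0) - (x - y) ∈ intLattice d := by
      have h1 : x0 - x ∈ intLattice d := torusMk_eq_iff.mp (hx0.trans hx.symm)
      have h2 : y0 - y ∈ intLattice d := torusMk_eq_iff.mp (hy0.trans hy.symm)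
      have : (x0 - y0) - (x - y) = (x0 - x) - (y0 - y) := by abel
      rw [this]
      exact sub_mem h1 h2
    have hkr : (x0 - y0) - (x - y) = r := by
      funext i
      obtain ⟨m, hm⟩ := hk i
      have hxyi : (x - y) i = c i - (m : ℝ) := by
        have : c i - (x - y) i = (m : ℝ) := by
          simpa [hc, Pi.sub_apply] using hm
        linarith
      have hmc : |c i - (m : ℝ)| < 1/2 := by
        rw [← hxyi]
        calc |(x - y) i| = ‖(x - y) i‖ := (Real.norm_eq_abs _).symm
          _ ≤ ‖x - y‖ := norm_le_pi_norm _ i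
          _ < ε := hxy
          _ < 1/2 := hε2
      have hround : |c i - ((round (c i) : ℤ) : ℝ)| ≤ 1/2 := by
        simpa [abs_sub_comm] using abs_sub_round (c i)
      have hint : |(m : ℝ) - ((round (c i) : ℤ) : ℝ)| < 1 := by
        calc |(m : ℝ) - ((round (c i) : ℤ) : ℝ)|
            ≤ |(m : ℝ) - c i| + |c i - ((round (c i) : ℤ) : ℝ)| := abs_sub_le _ _ _
          _ < 1/2 + 1/2 := by rw [abs_sub_comm]; exact add_lt_add_of_lt_of_le hmc hround
          _ = 1 := by norm_num
      have : m = round (c i) := by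
        have h' : |m - round (c i)| < 1 := by exact_mod_cast (by push_cast; exact hint : |((m - round (c i) : ℤ) : ℝ)| < 1)
        exact sub_eq_zero.mp (Int.abs_lt_one_iff.mp h')
      rw [hm, hrdef, this]
    have hcr : c - r = x - y := by
      rw [← hkr, hc]; abel
    rw [hcr]
    exact hxy
  have hzero : ‖c - r‖ = 0 := by
    by_contra hne
    have hpos : 0 < ‖c - r‖ := lt_of_le_of_ne (norm_nonneg _) (Ne.symm hne)
    have := key (min (‖c - r‖) (1/4)) (lt_min hpos (by norm_num))
      (lt_of_le_of_lt (min_le_right _ _) (by norm_num))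
    exact absurd this (not_lt.mpr (min_le_left _ _))
  have : c = r := sub_eq_zero.mp (norm_eq_zero.mp hzero)
  rw [← hx0, ← hy0]
  refine torusMk_eq_iff.mpr ?_
  rw [← hc, this]
  exact hrmem

lemma torusDist_pos {z w : Torus d} (h : z ≠ w) : 0 < torusDist d z w := by
  rcases lt_or_eq_of_le (torusDist_nonneg z w) with h' | h'
  · exact h'
  · exact absurd (eq_of_forall_torusDist_lt (fun ε hε => h'.symm ▸ hε)) h

lemma torusDist_triangle (z₁ z₂ z₃ : Torus d) :
    torusDist d z₁ z₃ ≤ torusDist d z₁ z₂ + torusDist d z₂ z₃ := by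
  refine le_of_forall_pos_le_add ?_
  intro ε hε
  obtain ⟨x, y, hx, hy, hxy⟩ := exists_lift_lt
    (show torusDist d z₁ z₂ < torusDist d z₁ z₂ + ε/2 by linarith)
  obtain ⟨y', w, hy', hw, hyw⟩ := exists_lift_lt
    (show torusDist d z₂ z₃ < torusDist d z₂ z₃ + ε/2 by linarith)
  have hk : y' - y ∈ intLattice d := torusMk_eq_iff.mp (hy'.trans hy.symm)
  have hwk : torusMk d (w - (y' - y)) = z₃ := by
    rw [map_sub, hw, torusMk_eq_zero_iff.mpr hk |> sub_eq_self.mpr]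
  calc torusDist d z₁ z₃ ≤ ‖x - (w - (y' - y))‖ := by
        rw [← hx, ← hwk]; exact torusDist_le _ _
    _ = ‖(x - y) + (y' - w)‖ := by congr 1; abel
    _ ≤ ‖x - y‖ + ‖y' - w‖ := norm_add_le _ _
    _ ≤ torusDist d z₁ z₂ + torusDist d z₂ z₃ + ε := by linarith

lemma torusHom_mk (M : Matrix (Fin d) (Fin d) ℤ) (x : Fin d → ℝ) :
    torusHom M (torusMk d x) = torusMk d ((toR M) *ᵥ x) := rfl

lemma torusDist_hom_le (M : Matrix (Fin d) (Fin d) ℤ) {L : ℝ} (hL0 : 0 ≤ L)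
    (hL : ∀ v : Fin d → ℝ, ‖(toR M) *ᵥ v‖ ≤ L * ‖v‖) (z w : Torus d) :
    torusDist d (torusHom M z) (torusHom M w) ≤ L * torusDist d z w := by
  refine le_of_forall_pos_le_add ?_
  intro ε hε
  have hε' : 0 < ε / (L + 1) := by positivity
  obtain ⟨x, y, hx, hy, hxy⟩ := exists_lift_lt
    (show torusDist d z w < torusDist d z w + ε / (L + 1) by linarith)
  calc torusDist d (torusHom M z) (torusHom M w)
      ≤ ‖(toR M) *ᵥ x - (toR M) *ᵥ y‖ := by
        rw [← hx, ← hy, torusHom_mk, torusHom_mk]; exact torusDist_le _ _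
    _ = ‖(toR M) *ᵥ (x - y)‖ := by rw [Matrix.mulVec_sub]
    _ ≤ L * ‖x - y‖ := hL _
    _ ≤ L * (torusDist d z w + ε / (L + 1)) :=
        mul_le_mul_of_nonneg_left hxy.le hL0
    _ ≤ L * torusDist d z w + ε := by
        rw [mul_add]
        have : L * (ε / (L + 1)) ≤ ε := by
          rw [div_eq_inv_mul, ← mul_assoc]
          have h1 : L * (L + 1)⁻¹ ≤ 1 := by
            rw [mul_inv_le_iff₀ (by linarith)]; linarith
          nlinarith
        linarith

lemma torusDist_add_le_norm (w : Torus d) (v : Fin d → ℝ) :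
    torusDist d (w + torusMk d v) w ≤ ‖v‖ := by
  obtain ⟨y0, hy0⟩ := torusMk_surjective (d := d) w
  have h1 : torusMk d (y0 + v) = w + torusMk d v := by rw [map_add, hy0]
  calc torusDist d (w + torusMk d v) w ≤ ‖(y0 + v) - y0‖ := by
        rw [← h1, ← hy0]; exact torusDist_le _ _
    _ = ‖v‖ := by congr 1; abel

end TorusDistAux
section SpectralAux

open Polynomial

lemma charmatrix_transpose' {d : ℕ} {R : Type*} [CommRing R] (M : Matrix (Fin d) (Fin d) R) :
    charmatrix Mᵀ = (charmatrix M)ᵀ := by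
  ext i j : 2
  by_cases h : i = j
  · subst h; simp
  · simp [charmatrix_apply_ne _ _ _ h, charmatrix_apply_ne _ _ _ (Ne.symm h)]

lemma charpoly_transpose' {d : ℕ} {R : Type*} [CommRing R] (M : Matrix (Fin d) (Fin d) R) :
    Matrix.charpoly Mᵀ = Matrix.charpoly M := by
  rw [Matrix.charpoly, charmatrix_transpose', Matrix.det_transpose, Matrix.charpoly]

lemma mem_spectrum_iff_isRoot_charpoly {d : ℕ} (M : Matrix (Fin d) (Fin d) ℂ) (μ : ℂ) :
    μ ∈ spectrum ℂ M ↔ M.charpoly.IsRoot μ := by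
  have hdet : (Polynomial.evalRingHom μ).mapMatrix (charmatrix M) =
      algebraMap ℂ (Matrix (Fin d) (Fin d) ℂ) μ - M := by
    ext i j
    by_cases h : i = j
    · subst h
      simp [Matrix.algebraMap_matrix_apply]
    · simp [charmatrix_apply_ne _ _ _ h, Matrix.algebraMap_matrix_apply, h]
  rw [spectrum.mem_iff, Matrix.isUnit_iff_isUnit_det, isUnit_iff_ne_zero, not_not,
    Polynomial.IsRoot.def, Matrix.charpoly, ← Polynomial.coe_evalRingHom,
    RingHom.map_det, hdet]

lemma expansive_det_ne_zero {d : ℕ} (A : Matrix (Fin d) (Fin d) ℤ) (hA : Expansive A) :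
    (toR A).det ≠ 0 := by
  have hc : (A.map (Int.cast : ℤ → ℂ)).det ≠ 0 := by
    rw [Matrix.det_eq_prod_roots_charpoly]
    intro h
    rw [Multiset.prod_eq_zero_iff] at h
    have hroot : (A.map (Int.cast : ℤ → ℂ)).charpoly.IsRoot 0 :=
      (Polynomial.mem_roots (Matrix.charpoly_monic _).ne_zero).mp h
    have := hA 0 hroot
    simp only [norm_zero] at this
    linarith
  have h1 : (A.map (Int.cast : ℤ → ℂ)).det = ((A.det : ℤ) : ℂ) := by
    rw [show (A.map (Int.cast : ℤ → ℂ)) = (Int.castRingHom ℂ).mapMatrix A from rfl,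
      ← RingHom.map_det]
    rfl
  have h2 : (toR A).det = ((A.det : ℤ) : ℝ) := by
    rw [show toR A = (Int.castRingHom ℝ).mapMatrix A from rfl, ← RingHom.map_det]
    rfl
  rw [h1] at hc
  rw [h2]
  exact_mod_cast fun hh => hc (by exact_mod_cast hh)

end SpectralAux
section NormedAux

open scoped ENNReal NNReal

attribute [local instance] Matrix.linftyOpNormedAddCommGroup Matrix.linftyOpNormedRing
  Matrix.linftyOpNormedAlgebra

lemma exists_mulVec_bound {d : ℕ} (M : Matrix (Fin d) (Fin d) ℝ) :
    ∃ L : ℝ, 0 ≤ L ∧ ∀ v : Fin d → ℝ, ‖M *ᵥ v‖ ≤ L * ‖v‖ :=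
  ⟨‖M‖, norm_nonneg _, fun v => Matrix.linfty_opNorm_mulVec M v⟩

lemma expansive_pow_inv_mulVec_tendsto {d : ℕ} (hd : 0 < d) (A : Matrix (Fin d) (Fin d) ℤ)
    (hA : Expansive A) (x : Fin d → ℝ) :
    Filter.Tendsto (fun n : ℕ => ‖(((toR A)ᵀ)⁻¹ ^ n) *ᵥ x‖) Filter.atTop (nhds 0) := by
  haveI : Nonempty (Fin d) := ⟨⟨0, hd⟩⟩
  set T : Matrix (Fin d) (Fin d) ℝ := (toR A)ᵀ with hT
  set f : ℝ →+* ℂ := Complex.ofRealHom with hf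
  have hdetT : IsUnit T.det := by
    rw [hT, Matrix.det_transpose]
    exact isUnit_iff_ne_zero.mpr (expansive_det_ne_zero A hA)
  set Tc : Matrix (Fin d) (Fin d) ℂ := T.map f with hTc
  have hdetTc : IsUnit Tc.det := by
    rw [hTc, show T.map f = f.mapMatrix T from rfl, ← RingHom.map_det]
    rw [isUnit_iff_ne_zero] at hdetT ⊢
    simpa [hf] using hdetT
  have hU : IsUnit Tc := (Matrix.isUnit_iff_isUnit_det _).mpr hdetTc
  have hcoe : ((hU.unit⁻¹ : (Matrix (Fin d) (Fin d) ℂ)ˣ) : Matrix (Fin d) (Fin d) ℂ) = Tc⁻¹ := by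
    rw [Matrix.coe_units_inv, hU.unit_spec]
  have hTcT : Tc = (A.map (Int.cast : ℤ → ℂ))ᵀ := by
    ext i j
    simp [hTc, hT, toR, hf, Matrix.map_apply, Matrix.transpose_apply]
  have hspec : ∀ μ ∈ spectrum ℂ (Tc⁻¹), ‖μ‖₊ < 1 := by
    intro μ hμ
    have hμ0 : μ ≠ 0 := by
      rintro rfl
      rw [← hcoe] at hμ
      exact Units.zero_notMem_spectrum ℂ _ hμ
    have hinv : μ⁻¹ ∈ spectrum ℂ Tc := by
      rw [← hU.unit_spec]
      refine (spectrum.inv₀_mem_inv_iff (r := μ⁻¹)).mp ?_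
      rw [inv_inv, hcoe]
      exact hμ
    rw [_root_.mem_spectrum_iff_isRoot_charpoly, hTcT, charpoly_transpose'] at hinv
    have h1 : 1 < ‖μ⁻¹‖ := hA μ⁻¹ hinv
    rw [norm_inv] at h1
    have habs : 0 < ‖μ‖ := norm_pos_iff.mpr hμ0
    have h2 : ‖μ‖ < 1 := by
      rw [lt_inv_comm₀] at h1 <;> [skip; norm_num; exact habs]
      simpa using h1
    have h3 : ‖μ‖ < 1 := h2
    exact_mod_cast h3
  have hrad : spectralRadius ℂ (Tc⁻¹) < 1 := by
    have := spectrum.spectralRadius_lt_of_forall_lt (a := Tc⁻¹) (r := 1) hspec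
    simpa using this
  obtain ⟨r, hr1, hr2⟩ := ENNReal.lt_iff_exists_nnreal_btwn.mp hrad
  have hrlt1 : (r : ℝ) < 1 := by exact_mod_cast ENNReal.coe_lt_one_iff.mp hr2
  have hlim := spectrum.limsup_pow_nnnorm_pow_one_div_le_spectralRadius (Tc⁻¹)
  have hev : ∀ᶠ n : ℕ in Filter.atTop,
      (‖(Tc⁻¹) ^ n‖₊ : ℝ≥0∞) ^ (1/(n:ℝ)) < (r : ℝ≥0∞) :=
    Filter.eventually_lt_of_limsup_lt (lt_of_le_of_lt hlim hr1)
  have hev2 : ∀ᶠ n : ℕ in Filter.atTop, ‖(Tc⁻¹) ^ n‖ ≤ (r : ℝ) ^ n := by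
    filter_upwards [hev, Filter.eventually_ge_atTop 1] with n hn hn1
    have hne : (n : ℝ) ≠ 0 := by
      have : (0:ℝ) < n := by exact_mod_cast hn1
      exact this.ne'
    have hlt := ENNReal.rpow_lt_rpow hn (by positivity : (0:ℝ) < (n:ℝ))
    rw [← ENNReal.rpow_mul, one_div_mul_cancel hne, ENNReal.rpow_one,
      ENNReal.rpow_natCast, ← ENNReal.coe_pow, ENNReal.coe_lt_coe] at hlt
    have : ‖(Tc⁻¹) ^ n‖₊ ≤ r ^ n := hlt.le
    exact_mod_cast this
  have hmapinv : T⁻¹.map f = Tc⁻¹ := by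
    refine (Matrix.inv_eq_left_inv ?_).symm
    rw [hTc, ← Matrix.map_mul]
    rw [Matrix.nonsing_inv_mul T hdetT]
    exact Matrix.map_one f f.map_zero f.map_one
  have hnormmap : ∀ n : ℕ, ‖T⁻¹ ^ n‖ = ‖(Tc⁻¹) ^ n‖ := by
    intro n
    have hpow : (T⁻¹ ^ n).map f = (Tc⁻¹) ^ n := by
      rw [← hmapinv, ← RingHom.mapMatrix_apply, ← RingHom.mapMatrix_apply, map_pow]
    rw [← hpow, Matrix.linfty_opNorm_def, Matrix.linfty_opNorm_def]
    congr 1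
    apply Finset.sup_congr rfl
    intro i _
    apply Finset.sum_congr rfl
    intro j _
    simp [Matrix.map_apply, hf]
  have hbound : ∀ᶠ n : ℕ in Filter.atTop,
      ‖(T⁻¹ ^ n) *ᵥ x‖ ≤ (r : ℝ) ^ n * ‖x‖ := by
    filter_upwards [hev2] with n hn
    calc ‖(T⁻¹ ^ n) *ᵥ x‖ ≤ ‖T⁻¹ ^ n‖ * ‖x‖ := Matrix.linfty_opNorm_mulVec _ _
      _ = ‖(Tc⁻¹) ^ n‖ * ‖x‖ := by rw [hnormmap]
      _ ≤ (r : ℝ) ^ n * ‖x‖ := mul_le_mul_of_nonneg_right hn (norm_nonneg _)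
  have htend : Filter.Tendsto (fun n : ℕ => (r : ℝ) ^ n * ‖x‖) Filter.atTop (nhds 0) := by
    have := (tendsto_pow_atTop_nhds_zero_of_lt_one r.coe_nonneg hrlt1).mul_const ‖x‖
    simpa using this
  exact squeeze_zero' (Filter.Eventually.of_forall fun n => norm_nonneg _) hbound htend

end NormedAux
/-- a point of the solenoid lies in S_A(C) iff its entries approach
the cycle C = {ζ_0, …, ζ_{p−1}}. -/
theorem statement4 (d : ℕ) (hd : 0 < d) (A : Matrix (Fin d) (Fin d) ℤ)
    (hA : Expansive A) (p : ℕ) (hp : 0 < p) (ζ : ZMod p → Torus d)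
    (hζ : ∀ j : ZMod p, torusHom Aᵀ (ζ (j + 1)) = ζ j)
    (hdistinct : Function.Injective ζ)
    (z : ℕ → Torus d) (hz : z ∈ solenoid A) :
    z ∈ cycleCoset p A ζ ↔
      Filter.Tendsto (fun n => ⨅ j : ZMod p, torusDist d (z n) (ζ j))
        Filter.atTop (nhds 0) := by
  classical
  haveI : NeZero p := ⟨hp.ne'⟩
  haveI : Nonempty (Fin d) := ⟨⟨0, hd⟩⟩
  set T : Matrix (Fin d) (Fin d) ℝ := (toR A)ᵀ with hTdef
  have hdetT : IsUnit T.det := by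
    rw [hTdef, Matrix.det_transpose]
    exact isUnit_iff_ne_zero.mpr (expansive_det_ne_zero A hA)
  have htoR : toR Aᵀ = T := rfl
  obtain ⟨L, hL0, hL⟩ := exists_mulVec_bound (toR Aᵀ)
  have hzrec : ∀ n, torusHom Aᵀ (z (n+1)) = z n := hz
  constructor
  · rintro hmem
    obtain ⟨S, ⟨j, rfl⟩, hzS⟩ := hmem
    obtain ⟨x, hx⟩ := hzS
    have hzn : ∀ n : ℕ, z n = ζ ((n : ZMod p) + j) + torusMk d ((T⁻¹ ^ n) *ᵥ x) := by
      intro n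
      rw [← hx]; rfl
    apply squeeze_zero (g := fun n => ‖(T⁻¹ ^ n) *ᵥ x‖)
      (fun n => le_ciInf fun j' => torusDist_nonneg _ _) ?_
      (expansive_pow_inv_mulVec_tendsto hd A hA x)
    intro n
    calc ⨅ j', torusDist d (z n) (ζ j') ≤ torusDist d (z n) (ζ ((n : ZMod p) + j)) :=
        ciInf_le ⟨0, by rintro r ⟨j', rfl⟩; exact torusDist_nonneg _ _⟩ _
      _ ≤ ‖(T⁻¹ ^ n) *ᵥ x‖ := by rw [hzn n]; exact torusDist_add_le_norm _ _
  · intro htend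
    set F : Finset (ZMod p × ZMod p) := Finset.univ.filter (fun q => q.1 ≠ q.2) with hF
    set E : Finset ℝ := insert 1 (F.image fun q => torusDist d (ζ q.1) (ζ q.2)) with hE
    have hEne : E.Nonempty := ⟨1, Finset.mem_insert_self _ _⟩
    set ε₀ : ℝ := E.min' hEne with hε₀def
    have hε₀pos : 0 < ε₀ := by
      have hpos : ∀ r ∈ E, 0 < r := by
        intro r hr
        rcases Finset.mem_insert.mp hr with h | h
        · rw [h]; norm_num
        · obtain ⟨q, hq, rfl⟩ := Finset.mem_image.mp h
          have hne : q.1 ≠ q.2 := (Finset.mem_filter.mp hq).2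
          exact torusDist_pos (fun hc => hne (hdistinct hc))
      exact hpos _ (E.min'_mem hEne)
    have hsep : ∀ a b : ZMod p, torusDist d (ζ a) (ζ b) < ε₀ → a = b := by
      intro a b hab
      by_contra hne
      have hmem : torusDist d (ζ a) (ζ b) ∈ E :=
        Finset.mem_insert_of_mem (Finset.mem_image_of_mem _
          (Finset.mem_filter.mpr ⟨Finset.mem_univ (a, b), hne⟩))
      exact absurd hab (not_lt.mpr (Finset.min'_le E _ hmem))
    set ε : ℝ := min ε₀ 1 / (2 * (L + 1)) with hεdef
    have hLpos : (0:ℝ) < L + 1 := by linarith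
    have hmin_pos : 0 < min ε₀ 1 := lt_min hε₀pos one_pos
    have hεpos : 0 < ε := div_pos hmin_pos (by linarith)
    have hkey : (L + 1) * ε = min ε₀ 1 / 2 := by
      rw [hεdef]; field_simp
    have h1 : (L + 1) * ε < ε₀ := by
      rw [hkey]; have := min_le_left ε₀ 1; linarith
    have h2 : (L + 1) * ε < 1 := by
      rw [hkey]; have := min_le_right ε₀ 1; linarith
    have hev : ∀ᶠ n in Filter.atTop, (⨅ j', torusDist d (z n) (ζ j')) < ε :=
      htend.eventually (gt_mem_nhds hεpos)
    obtain ⟨N, hN⟩ := Filter.eventually_atTop.mp hev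
    have hex : ∀ n : ℕ, ∃ jj : ZMod p, N ≤ n → torusDist d (z n) (ζ jj) < ε := by
      intro n
      by_cases hn : N ≤ n
      · obtain ⟨jj, hjj⟩ := exists_lt_of_ciInf_lt (hN n hn)
        exact ⟨jj, fun _ => hjj⟩
      · exact ⟨0, fun h => absurd h hn⟩
    choose jn hjn using hex
    have hstep : ∀ n : ℕ, N ≤ n → jn (n + 1) = jn n + 1 := by
      intro n hn
      have hba : jn n = jn (n+1) - 1 := by
        apply hsep
        have hζ' : torusHom Aᵀ (ζ (jn (n+1))) = ζ (jn (n+1) - 1) := by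
          have h' := hζ (jn (n+1) - 1)
          rwa [sub_add_cancel] at h'
        calc torusDist d (ζ (jn n)) (ζ (jn (n+1) - 1))
            ≤ torusDist d (ζ (jn n)) (z n) + torusDist d (z n) (ζ (jn (n+1) - 1)) :=
              torusDist_triangle _ _ _
          _ < ε + L * ε := by
              apply add_lt_add_of_lt_of_le
              · rw [torusDist_symm]; exact hjn n hn
              · rw [← hzrec n, ← hζ']
                calc torusDist d (torusHom Aᵀ (z (n+1))) (torusHom Aᵀ (ζ (jn (n+1))))
                    ≤ L * torusDist d (z (n+1)) (ζ (jn (n+1))) :=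
                      torusDist_hom_le Aᵀ hL0 hL _ _
                  _ ≤ L * ε := mul_le_mul_of_nonneg_left (hjn (n+1) (by omega)).le hL0
          _ = (L+1)*ε := by ring
          _ < ε₀ := h1
      rw [hba]; ring
    set j : ZMod p := jn N - (N : ℕ) with hjdef
    have hlin : ∀ n : ℕ, N ≤ n → jn n = (n : ZMod p) + j := by
      have haux : ∀ m : ℕ, jn (N + m) = jn N + (m : ZMod p) := by
        intro m
        induction m with
        | zero => simp
        | succ k ih =>
          have h' := hstep (N + k) (Nat.le_add_right _ _)
          rw [show N + (k+1) = (N + k) + 1 from rfl, h', ih]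
          push_cast
          ring
      intro n hn
      obtain ⟨m, rfl⟩ := Nat.exists_eq_add_of_le hn
      rw [haux m, hjdef]
      push_cast
      ring
    have hex2 : ∀ n : ℕ, ∃ v : Fin d → ℝ, N ≤ n →
        torusMk d v = z n - ζ ((n : ZMod p) + j) ∧ ‖v‖ < ε := by
      intro n
      by_cases hn : N ≤ n
      · have hd' : torusDist d (z n) (ζ ((n : ZMod p) + j)) < ε := by
          rw [← hlin n hn]; exact hjn n hn
        obtain ⟨a, b, ha, hb, hab⟩ := exists_lift_lt hd'
        exact ⟨a - b, fun _ => ⟨by rw [map_sub, ha, hb], hab⟩⟩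
      · exact ⟨0, fun h => absurd h hn⟩
    choose v hv using hex2
    have hexact : ∀ n : ℕ, N ≤ n → T *ᵥ v (n + 1) = v n := by
      intro n hn
      have hn1 : N ≤ n + 1 := by omega
      obtain ⟨hv1, hv1n⟩ := hv (n+1) hn1
      obtain ⟨hv0, hv0n⟩ := hv n hn
      have hq : torusMk d (T *ᵥ v (n+1)) = torusMk d (v n) := by
        rw [← htoR, ← torusHom_mk, hv1, map_sub, hzrec n]
        have hcast : ((n+1 : ℕ) : ZMod p) + j = ((n : ZMod p) + j) + 1 := by
          push_cast; ring
        rw [hcast, hζ ((n : ZMod p) + j), hv0]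
      have hlat : T *ᵥ v (n+1) - v n ∈ intLattice d := torusMk_eq_iff.mp hq
      have hnorm : ‖T *ᵥ v (n+1) - v n‖ < 1 := by
        calc ‖T *ᵥ v (n+1) - v n‖ ≤ ‖T *ᵥ v (n+1)‖ + ‖v n‖ := norm_sub_le _ _
          _ ≤ L * ‖v (n+1)‖ + ‖v n‖ := by
              have := hL (v (n+1)); rw [htoR] at this; linarith
          _ < L * ε + ε := by
              have h3 : L * ‖v (n+1)‖ ≤ L * ε :=
                mul_le_mul_of_nonneg_left hv1n.le hL0
              linarith
          _ = (L+1)*ε := by ring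
          _ < 1 := h2
      have := intLattice_eq_zero_of_norm_lt_one hlat hnorm
      exact sub_eq_zero.mp this
    set x : Fin d → ℝ := (T ^ N) *ᵥ v N with hxdef
    have hTinvpow : ∀ k : ℕ, T⁻¹ ^ k * T ^ k = 1 := by
      intro k
      induction k with
      | zero => simp
      | succ k ih =>
        rw [pow_succ, pow_succ', Matrix.mul_assoc, ← Matrix.mul_assoc T⁻¹ T,
          Matrix.nonsing_inv_mul T hdetT, Matrix.one_mul, ih]
    have hvN : ∀ m : ℕ, v N = (T ^ m) *ᵥ v (N + m) := by
      intro m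
      induction m with
      | zero => simp
      | succ k ih =>
        rw [ih, show N + (k+1) = (N + k) + 1 from rfl,
          ← hexact (N + k) (Nat.le_add_right _ _), Matrix.mulVec_mulVec, ← pow_succ]
    have hclaimA : ∀ n : ℕ, N ≤ n → (T⁻¹ ^ n) *ᵥ x = v n := by
      intro n hn
      obtain ⟨m, rfl⟩ := Nat.exists_eq_add_of_le hn
      have hone : T⁻¹ ^ (N+m) * (T ^ N * T ^ m) = 1 := by rw [← pow_add, hTinvpow]
      rw [hxdef, hvN m, Matrix.mulVec_mulVec, Matrix.mulVec_mulVec, Matrix.mul_assoc,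
        hone, Matrix.one_mulVec]
    set y : ℕ → Torus d := fun n => ζ ((n : ZMod p) + j) + torusMk d ((T⁻¹ ^ n) *ᵥ x)
      with hydef
    have hy_step : ∀ n : ℕ, torusHom Aᵀ (y (n + 1)) = y n := by
      intro n
      rw [hydef]
      simp only [map_add]
      congr 1
      · have hcast : ((n+1 : ℕ) : ZMod p) + j = ((n : ZMod p) + j) + 1 := by
          push_cast; ring
        rw [hcast]
        exact hζ ((n : ZMod p) + j)
      · rw [torusHom_mk, htoR]
        rw [Matrix.mulVec_mulVec]
        congr 1
        rw [pow_succ', ← Matrix.mul_assoc, Matrix.mul_nonsing_inv T hdetT, Matrix.one_mul]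
    have hyz_ge : ∀ n : ℕ, N ≤ n → z n = y n := by
      intro n hn
      obtain ⟨hv0, -⟩ := hv n hn
      rw [hydef]
      simp only []
      rw [hclaimA n hn, hv0]
      abel
    have hall : ∀ n : ℕ, z n = y n := by
      have hdown : ∀ m n : ℕ, n + m = N → z n = y n := by
        intro m
        induction m with
        | zero => intro n hn; exact hyz_ge n (by omega)
        | succ k ih =>
          intro n hn
          have h' : z (n+1) = y (n+1) := ih (n+1) (by omega)
          rw [← hzrec n, h', hy_step n]
      intro n
      rcases le_or_gt N n with h | h
      · exact hyz_ge n h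
      · exact hdown (N - n) n (by omega)
    apply Set.mem_iUnion.mpr
    refine ⟨j, x, ?_⟩
    funext n
    show ζ ((n : ZMod p) + j) + ihat A x n = z n
    rw [hall n]
    rfl
end

section
/- Let F be a subset of ℝ^d. Then: (a) the restriction of 𝔡 to F × Ω is injective if and only if F ∩ (F + k) = ∅ for every k ∈ ℤ^d with k ≠ 0; and (b) the restriction of 𝔡 to F × Ω is onto S_A if and only if ⋃_{k∈ℤ^d} (F + k) = ℝ^d. -/
open Matrix MeasureTheory Filter Topology

/-- D is a complete set of representatives of ℤ^d / Aᵀℤ^d. -/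
def CompleteDigits {d : ℕ} (A : Matrix (Fin d) (Fin d) ℤ) (D : Set (Fin d → ℤ)) : Prop :=
  ∀ x : Fin d → ℤ, ∃! v : Fin d → ℤ, v ∈ D ∧ ∃ y : Fin d → ℤ, x - v = Aᵀ.mulVec y

/-- The affine map τ_v(x) = (Aᵀ)⁻¹(x + v) for a digit v ∈ ℤ^d. -/
noncomputable def tauD {d : ℕ} (A : Matrix (Fin d) (Fin d) ℤ) (v : Fin d → ℤ)
    (x : Fin d → ℝ) : Fin d → ℝ :=
  (((toR A)ᵀ)⁻¹).mulVec (x + fun i => (v i : ℝ))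

/-- The attractor X(Aᵀ, D) = { ∑_{j≥1} (Aᵀ)^{−j} d_j : d_j ∈ D }. -/
def attractor (d : ℕ) (A : Matrix (Fin d) (Fin d) ℤ) (D : Set (Fin d → ℤ)) :
    Set (Fin d → ℝ) :=
  {x | ∃ dig : ℕ → Fin d → ℤ, (∀ j, dig j ∈ D) ∧
    HasSum (fun j : ℕ => ((((toR A)ᵀ)⁻¹) ^ (j + 1)).mulVec fun i => (dig j i : ℝ)) x}

/-- Iterated maps: tauWord ω n = τ_{ω_{n−1}} ∘ ⋯ ∘ τ_{ω_0} (identity for n = 0). -/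
noncomputable def tauWord {d : ℕ} (A : Matrix (Fin d) (Fin d) ℤ)
    (ω : ℕ → Fin d → ℤ) : ℕ → (Fin d → ℝ) → Fin d → ℝ
  | 0 => fun x => x
  | n + 1 => fun x => tauD A (ω n) (tauWord A ω n x)

/-- The decoding map 𝔡 : ℝ^d × Ω → S_A, 𝔡(x,ω)_n = π(τ_{ω_{n−1}}⋯τ_{ω_0} x). -/
noncomputable def codeMap {d : ℕ} (A : Matrix (Fin d) (Fin d) ℤ)
    (x : Fin d → ℝ) (ω : ℕ → Fin d → ℤ) : ℕ → Torus d :=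
  fun n => torusMk d (tauWord A ω n x)

namespace Stmt10Aux

noncomputable section
open Matrix

variable {d : ℕ}

/-- cast of an integer vector -/
def cv (k : Fin d → ℤ) : Fin d → ℝ := fun i => (k i : ℝ)

lemma cv_mem (k : Fin d → ℤ) : cv k ∈ intLattice d := fun i => ⟨k i, rfl⟩

lemma mem_intLattice {x : Fin d → ℝ} (h : x ∈ intLattice d) : ∃ k, x = cv k := by
  choose k hk using h; exact ⟨k, funext hk⟩

lemma cv_inj {k k' : Fin d → ℤ} (h : cv k = cv k') : k = k' := by
  funext i; simpa [cv] using congrFun h i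

lemma cv_sub (k k' : Fin d → ℤ) : cv (k - k') = cv k - cv k' := by
  funext i; simp [cv]

lemma cv_add (k k' : Fin d → ℤ) : cv (k + k') = cv k + cv k' := by
  funext i; simp [cv]

lemma cv_zero : cv (0 : Fin d → ℤ) = 0 := by funext i; simp [cv]

lemma mulVec_cv (M : Matrix (Fin d) (Fin d) ℤ) (k : Fin d → ℤ) :
    (toR M).mulVec (cv k) = cv (M.mulVec k) := by
  funext i
  simp [toR, cv, Matrix.mulVec, dotProduct]

lemma toR_transpose (M : Matrix (Fin d) (Fin d) ℤ) : toR (Mᵀ) = (toR M)ᵀ :=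
  Matrix.transpose_map

lemma torusMk_eq {x y : Fin d → ℝ} : torusMk d x = torusMk d y ↔ x - y ∈ intLattice d := by
  rw [torusMk, QuotientAddGroup.mk'_eq_mk']
  constructor
  · rintro ⟨z, hz, rfl⟩; simpa using (intLattice d).neg_mem hz
  · intro h; exact ⟨y - x, by simpa using (intLattice d).neg_mem h, by abel⟩

lemma torusHom_mk (M : Matrix (Fin d) (Fin d) ℤ) (x : Fin d → ℝ) :
    torusHom M (torusMk d x) = torusMk d ((toR M).mulVec x) := rfl

lemma expansive_isUnit_det {A : Matrix (Fin d) (Fin d) ℤ} (hd : 0 < d) (hA : Expansive A) :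
    IsUnit ((toR A)ᵀ).det := by
  rw [Matrix.det_transpose]
  have hz : A.det ≠ 0 := by
    intro h
    have hdet : (A.map (Int.cast : ℤ → ℂ)).det = 0 := by
      rw [show A.map (Int.cast : ℤ → ℂ) = (Int.castRingHom ℂ).mapMatrix A from rfl,
        ← RingHom.map_det, h]
      simp
    have hr : (Matrix.charpoly (A.map (Int.cast : ℤ → ℂ))).IsRoot 0 := by
      rw [Polynomial.IsRoot, ← Polynomial.coeff_zero_eq_eval_zero]
      have h2 : ((-1:ℂ))^(Fintype.card (Fin d)) *
          (Matrix.charpoly (A.map (Int.cast : ℤ → ℂ))).coeff 0 = 0 := by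
        rw [← Matrix.det_eq_sign_charpoly_coeff, hdet]
      exact (mul_eq_zero.mp h2).resolve_left (pow_ne_zero _ (by norm_num))
    have := hA 0 hr
    norm_num at this
  have hcast : (toR A).det = (A.det : ℝ) := by
    rw [toR, show A.map (Int.cast : ℤ → ℝ) = (Int.castRingHom ℝ).mapMatrix A from rfl,
      ← RingHom.map_det]
    rfl
  rw [hcast]
  exact isUnit_iff_ne_zero.2 (by exact_mod_cast hz)

section WithUnit

variable {A : Matrix (Fin d) (Fin d) ℤ}

lemma tauD_eq (v : Fin d → ℤ) (x : Fin d → ℝ) :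
    tauD A v x = (((toR A)ᵀ)⁻¹).mulVec (x + cv v) := rfl

lemma B_tauD (hU : IsUnit ((toR A)ᵀ).det) (v : Fin d → ℤ) (x : Fin d → ℝ) :
    ((toR A)ᵀ).mulVec (tauD A v x) = x + cv v := by
  rw [tauD_eq, Matrix.mulVec_mulVec, Matrix.mul_nonsing_inv _ hU, Matrix.one_mulVec]

lemma Binv_cv_A (hU : IsUnit ((toR A)ᵀ).det) (m : Fin d → ℤ) :
    (((toR A)ᵀ)⁻¹).mulVec (cv (Aᵀ.mulVec m)) = cv m := by
  rw [← mulVec_cv Aᵀ m, toR_transpose, Matrix.mulVec_mulVec,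
    Matrix.nonsing_inv_mul _ hU, Matrix.one_mulVec]

lemma tauD_sub (v v' : Fin d → ℤ) (t t' : Fin d → ℝ) :
    tauD A v t - tauD A v' t' = (((toR A)ᵀ)⁻¹).mulVec ((t - t') + (cv v - cv v')) := by
  rw [tauD_eq, tauD_eq, ← Matrix.mulVec_sub]
  abel

lemma codeMap_mem_solenoid (hU : IsUnit ((toR A)ᵀ).det) (x : Fin d → ℝ) (ω : ℕ → Fin d → ℤ) :
    codeMap A x ω ∈ solenoid A := by
  intro n
  show torusHom Aᵀ (torusMk d (tauWord A ω (n+1) x)) = torusMk d (tauWord A ω n x)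
  rw [torusHom_mk, toR_transpose]
  have : ((toR A)ᵀ).mulVec (tauWord A ω (n+1) x) = tauWord A ω n x + cv (ω n) := by
    show ((toR A)ᵀ).mulVec (tauD A (ω n) (tauWord A ω n x)) = _
    exact B_tauD hU _ _
  rw [this, torusMk_eq]
  simpa using cv_mem (ω n)

end WithUnit

section Main
open Matrix

variable {d : ℕ} {A : Matrix (Fin d) (Fin d) ℤ}

lemma tauWord_succ (ω : ℕ → Fin d → ℤ) (n : ℕ) (x : Fin d → ℝ) :
    tauWord A ω (n + 1) x = tauD A (ω n) (tauWord A ω n x) := rfl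

lemma digit_eq (hU : IsUnit ((toR A)ᵀ).det) {D : Set (Fin d → ℤ)} (hD : CompleteDigits A D)
    {v v' : Fin d → ℤ} (hv : v ∈ D) (hv' : v' ∈ D) {t : Fin d → ℝ}
    (h : torusMk d (tauD A v t) = torusMk d (tauD A v' t)) : v = v' := by
  rw [torusMk_eq] at h
  obtain ⟨m, hm⟩ := mem_intLattice h
  have hB : ((toR A)ᵀ).mulVec (cv m) = cv v - cv v' := by
    rw [← hm, Matrix.mulVec_sub, B_tauD hU, B_tauD hU]
    abel
  rw [← toR_transpose, mulVec_cv, ← cv_sub] at hB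
  have hvv : v - v' = Aᵀ.mulVec m := (cv_inj hB).symm
  exact ((hD v).unique ⟨hv, 0, by simp⟩ ⟨hv', m, hvv⟩)

lemma omega_eq (hU : IsUnit ((toR A)ᵀ).det) {D : Set (Fin d → ℤ)} (hD : CompleteDigits A D)
    {x : Fin d → ℝ} {ω ω' : ℕ → Fin d → ℤ} (hω : ∀ n, ω n ∈ D) (hω' : ∀ n, ω' n ∈ D)
    (h : codeMap A x ω = codeMap A x ω') : ω = ω' := by
  have key : ∀ n, tauWord A ω n x = tauWord A ω' n x := by
    intro n
    induction n with
    | zero => rfl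
    | succ n ih =>
        have hcode : torusMk d (tauD A (ω n) (tauWord A ω n x)) =
            torusMk d (tauD A (ω' n) (tauWord A ω' n x)) := congrFun h (n + 1)
        rw [ih] at hcode
        have hn : ω n = ω' n := digit_eq hU hD (hω n) (hω' n) hcode
        rw [tauWord_succ, tauWord_succ, ih, hn]
  funext n
  have hcode : torusMk d (tauD A (ω n) (tauWord A ω n x)) =
      torusMk d (tauD A (ω' n) (tauWord A ω' n x)) := congrFun h (n + 1)
  rw [key n] at hcode
  exact digit_eq hU hD (hω n) (hω' n) hcode

lemma exists_shift (hU : IsUnit ((toR A)ᵀ).det) {D : Set (Fin d → ℤ)} (hD : CompleteDigits A D)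
    (x : Fin d → ℝ) (k : Fin d → ℤ) (ω : ℕ → Fin d → ℤ) :
    ∃ ω' : ℕ → Fin d → ℤ, (∀ n, ω' n ∈ D) ∧ codeMap A (x - cv k) ω' = codeMap A x ω := by
  classical
  let V : ℕ → (Fin d → ℤ) → (Fin d → ℤ) := fun n c => (hD (ω n + c)).exists.choose
  have hVD : ∀ n c, V n c ∈ D := fun n c => (hD (ω n + c)).exists.choose_spec.1
  let Y : ℕ → (Fin d → ℤ) → (Fin d → ℤ) :=
    fun n c => (hD (ω n + c)).exists.choose_spec.2.choose
  have hY : ∀ n c, (ω n + c) - V n c = Aᵀ.mulVec (Y n c) :=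
    fun n c => (hD (ω n + c)).exists.choose_spec.2.choose_spec
  let c : ℕ → Fin d → ℤ := fun n => Nat.rec k (fun n cn => Y n cn) n
  have hc0 : c 0 = k := rfl
  have hcs : ∀ n, c (n + 1) = Y n (c n) := fun n => rfl
  refine ⟨fun n => V n (c n), fun n => hVD n (c n), ?_⟩
  have key : ∀ n, tauWord A ω n x - tauWord A (fun m => V m (c m)) n (x - cv k) = cv (c n) := by
    intro n
    induction n with
    | zero => show x - (x - cv k) = cv k; abel
    | succ n ih =>
        rw [tauWord_succ, tauWord_succ, tauD_sub, ih]
        have h1 : cv (c n) + (cv (ω n) - cv (V n (c n))) = cv (Aᵀ.mulVec (Y n (c n))) := by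
          rw [← hY n (c n), cv_sub, cv_add]
          abel
        rw [h1, Binv_cv_A hU, hcs n]
  funext n
  show torusMk d (tauWord A _ n (x - cv k)) = torusMk d (tauWord A ω n x)
  rw [torusMk_eq]
  have h2 : tauWord A (fun m => V m (c m)) n (x - cv k) - tauWord A ω n x = -cv (c n) := by
    rw [← key n]; abel
  rw [h2]
  exact (intLattice d).neg_mem (cv_mem _)

end Main

section Main2
open Matrix

variable {d : ℕ} {A : Matrix (Fin d) (Fin d) ℤ}

lemma Binv_B (hU : IsUnit ((toR A)ᵀ).det) (v : Fin d → ℝ) :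
    (((toR A)ᵀ)⁻¹).mulVec (((toR A)ᵀ).mulVec v) = v := by
  rw [Matrix.mulVec_mulVec, Matrix.nonsing_inv_mul _ hU, Matrix.one_mulVec]

lemma ihat_mem (hU : IsUnit ((toR A)ᵀ).det) (x : Fin d → ℝ) : ihat A x ∈ solenoid A := by
  intro n
  show torusHom Aᵀ (torusMk d (((((toR A)ᵀ)⁻¹) ^ (n+1)).mulVec x)) =
    torusMk d (((((toR A)ᵀ)⁻¹) ^ n).mulVec x)
  rw [torusHom_mk, toR_transpose, Matrix.mulVec_mulVec]
  congr 2
  rw [pow_succ', ← Matrix.mul_assoc, Matrix.mul_nonsing_inv _ hU, Matrix.one_mul]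

lemma ihat_zero (x : Fin d → ℝ) : ihat A x 0 = torusMk d x := by
  show torusMk d (((((toR A)ᵀ)⁻¹) ^ 0).mulVec x) = _
  rw [pow_zero, Matrix.one_mulVec]

lemma exists_code (hU : IsUnit ((toR A)ᵀ).det) {D : Set (Fin d → ℤ)} (hD : CompleteDigits A D)
    {z : ℕ → Torus d} (hz : z ∈ solenoid A) {f : Fin d → ℝ} (hf : torusMk d f = z 0) :
    ∃ ω : ℕ → Fin d → ℤ, (∀ n, ω n ∈ D) ∧ codeMap A f ω = z := by
  classical
  have hrep : ∀ n, ∃ x, torusMk d x = z n := fun n =>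
    QuotientAddGroup.mk'_surjective (intLattice d) (z n)
  choose x hx using hrep
  let m : ℕ → (Fin d → ℝ) → (Fin d → ℤ) :=
    fun n y i => ⌊(((toR A)ᵀ).mulVec (x (n+1)) - y) i⌋
  let V : ℕ → (Fin d → ℝ) → (Fin d → ℤ) := fun n y => (hD (m n y)).exists.choose
  have hVD : ∀ n y, V n y ∈ D := fun n y => (hD (m n y)).exists.choose_spec.1
  let Y : ℕ → (Fin d → ℝ) → (Fin d → ℤ) :=
    fun n y => (hD (m n y)).exists.choose_spec.2.choose
  have hY : ∀ n y, m n y - V n y = Aᵀ.mulVec (Y n y) :=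
    fun n y => (hD (m n y)).exists.choose_spec.2.choose_spec
  let yseq : ℕ → Fin d → ℝ := fun n => Nat.rec f (fun n yn => tauD A (V n yn) yn) n
  have hys : ∀ n, yseq (n+1) = tauD A (V n (yseq n)) (yseq n) := fun n => rfl
  have hmk : ∀ n, torusMk d (yseq n) = z n := by
    intro n
    induction n with
    | zero => exact hf
    | succ n ih =>
        have h1 : torusMk d (((toR A)ᵀ).mulVec (x (n+1))) = torusMk d (yseq n) := by
          rw [ih, ← hz n, ← hx (n+1), ← toR_transpose]
          exact (torusHom_mk Aᵀ (x (n+1)))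
        rw [torusMk_eq] at h1
        obtain ⟨w, hw⟩ := mem_intLattice h1
        have hmval : m n (yseq n) = w := by
          funext i
          show ⌊(((toR A)ᵀ).mulVec (x (n+1)) - yseq n) i⌋ = w i
          rw [hw]
          exact Int.floor_intCast _
        have h5 : cv w - cv (V n (yseq n)) = cv (Aᵀ.mulVec (Y n (yseq n))) := by
          rw [← cv_sub, ← hmval, hY]
        have h3 : yseq n + cv (V n (yseq n)) =
            ((toR A)ᵀ).mulVec (x (n+1)) - cv (Aᵀ.mulVec (Y n (yseq n))) := by
          rw [← h5, ← hw]
          abel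
        have h2 : yseq (n+1) = x (n+1) - cv (Y n (yseq n)) := by
          rw [hys n, tauD_eq, h3, Matrix.mulVec_sub, Binv_B hU, Binv_cv_A hU]
        rw [h2, ← hx (n+1), torusMk_eq]
        have h4 : (x (n+1) - cv (Y n (yseq n))) - x (n+1) = -cv (Y n (yseq n)) := by abel
        rw [h4]
        exact (intLattice d).neg_mem (cv_mem _)
  have htw : ∀ n, tauWord A (fun n => V n (yseq n)) n f = yseq n := by
    intro n
    induction n with
    | zero => rfl
    | succ n ih => rw [tauWord_succ, ih]
  exact ⟨fun n => V n (yseq n), fun n => hVD n (yseq n), funext fun n => by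
    show torusMk d (tauWord A _ n f) = z n
    rw [htw n]; exact hmk n⟩

end Main2

end
end Stmt10Aux

/-- (a) 𝔡 is injective on F × Ω iff F ∩ (F + k) = ∅ for all
nonzero k ∈ ℤ^d; (b) 𝔡 maps F × Ω onto S_A iff the ℤ^d-translates of F
cover ℝ^d. -/
theorem statement10 (d : ℕ) (hd : 0 < d) (A : Matrix (Fin d) (Fin d) ℤ)
    (hA : Expansive A) (D : Set (Fin d → ℤ)) (hD : CompleteDigits A D)
    (F : Set (Fin d → ℝ)) :
    (Set.InjOn (fun q : (Fin d → ℝ) × (ℕ → Fin d → ℤ) => codeMap A q.1 q.2)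
        (F ×ˢ {ω : ℕ → Fin d → ℤ | ∀ n, ω n ∈ D}) ↔
      ∀ k : Fin d → ℤ, k ≠ 0 →
        F ∩ ((fun y => y + fun i => (k i : ℝ)) '' F) = ∅) ∧
    ((fun q : (Fin d → ℝ) × (ℕ → Fin d → ℤ) => codeMap A q.1 q.2) ''
        (F ×ˢ {ω : ℕ → Fin d → ℤ | ∀ n, ω n ∈ D}) = (solenoid A : Set (ℕ → Torus d)) ↔
      (⋃ k : Fin d → ℤ, (fun y => y + fun i => (k i : ℝ)) '' F) = Set.univ) := by
  have hU : IsUnit ((toR A)ᵀ).det := Stmt10Aux.expansive_isUnit_det hd hA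
  constructor
  · -- part (a)
    constructor
    · intro hinj k hk
      by_contra hne
      rw [← ne_eq, ← Set.nonempty_iff_ne_empty] at hne
      obtain ⟨x, hxF, y, hyF, hyx⟩ := hne
      obtain ⟨v0, hv0, -⟩ := (hD 0).exists
      obtain ⟨ω', hω', hcode⟩ := Stmt10Aux.exists_shift hU hD x k (fun _ => v0)
      have hxy : x - Stmt10Aux.cv k = y := by
        rw [← hyx]
        show (y + Stmt10Aux.cv k) - Stmt10Aux.cv k = y
        abel
      rw [hxy] at hcode
      have heq : (fun q : (Fin d → ℝ) × (ℕ → Fin d → ℤ) => codeMap A q.1 q.2)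
          (x, fun _ => v0) = (fun q : (Fin d → ℝ) × (ℕ → Fin d → ℤ) => codeMap A q.1 q.2)
          (y, ω') := hcode.symm
      have := hinj (Set.mk_mem_prod hxF (fun _ => hv0)) (Set.mk_mem_prod hyF hω') heq
      have hx_eq_y : x = y := congrArg Prod.fst this
      rw [hx_eq_y] at hxy
      have hcv0 : Stmt10Aux.cv k = 0 := sub_eq_self.mp hxy
      exact hk (Stmt10Aux.cv_inj (by rw [hcv0, Stmt10Aux.cv_zero]))
    · intro hsep
      rintro ⟨x, ω⟩ ⟨hxF, hω⟩ ⟨y, ω'⟩ ⟨hyF, hω'⟩ heq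
      simp only at heq
      have h0 : torusMk d x = torusMk d y := congrFun heq 0
      rw [Stmt10Aux.torusMk_eq] at h0
      obtain ⟨k, hkk⟩ := Stmt10Aux.mem_intLattice h0
      have hk0 : k = 0 := by
        by_contra hkne
        have hemp := hsep k hkne
        have hxmem : x ∈ F ∩ ((fun y => y + fun i => (k i : ℝ)) '' F) := by
          refine ⟨hxF, y, hyF, ?_⟩
          show y + Stmt10Aux.cv k = x
          rw [← hkk]; abel
        rw [hemp] at hxmem
        exact hxmem
      have hxy : x = y := by
        have h1 : x - y = 0 := by rw [hkk, hk0, Stmt10Aux.cv_zero]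
        exact sub_eq_zero.mp h1
      subst hxy
      have hωω : ω = ω' := Stmt10Aux.omega_eq hU hD hω hω' heq
      rw [hωω]
  · -- part (b)
    constructor
    · intro himg
      apply Set.eq_univ_of_forall
      intro x
      have hmem : ihat A x ∈ (fun q : (Fin d → ℝ) × (ℕ → Fin d → ℤ) => codeMap A q.1 q.2) ''
          (F ×ˢ {ω : ℕ → Fin d → ℤ | ∀ n, ω n ∈ D}) := by
        rw [himg]
        exact Stmt10Aux.ihat_mem hU x
      obtain ⟨⟨y, ω⟩, ⟨hyF, hω⟩, hcode⟩ := hmem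
      have h0 : torusMk d y = torusMk d x := by
        have h1 : codeMap A y ω 0 = ihat A x 0 := congrFun hcode 0
        rw [Stmt10Aux.ihat_zero] at h1
        exact h1
      rw [Stmt10Aux.torusMk_eq] at h0
      obtain ⟨k, hkk⟩ := Stmt10Aux.mem_intLattice h0
      refine Set.mem_iUnion.2 ⟨-k, y, hyF, ?_⟩
      show y + Stmt10Aux.cv (-k) = x
      have hnk : Stmt10Aux.cv (-k) = -Stmt10Aux.cv k := by
        funext i; simp [Stmt10Aux.cv]
      rw [hnk, ← hkk]
      abel
    · intro hcover
      apply Set.Subset.antisymm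
      · rintro _ ⟨⟨x, ω⟩, ⟨hxF, hω⟩, rfl⟩
        exact Stmt10Aux.codeMap_mem_solenoid hU x ω
      · intro z hz
        obtain ⟨x0, hx0⟩ := QuotientAddGroup.mk'_surjective (intLattice d) (z 0)
        have hx0' : torusMk d x0 = z 0 := hx0
        have hx0mem : x0 ∈ ⋃ k : Fin d → ℤ, (fun y => y + fun i => (k i : ℝ)) '' F := by
          rw [hcover]; exact Set.mem_univ x0
        obtain ⟨k, f, hfF, hfx⟩ := Set.mem_iUnion.1 hx0mem
        have hf : torusMk d f = z 0 := by
          rw [← hx0', Stmt10Aux.torusMk_eq]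
          have : f - x0 = -Stmt10Aux.cv k := by
            rw [← hfx]
            show f - (f + Stmt10Aux.cv k) = _
            abel
          rw [this]
          exact (intLattice d).neg_mem (Stmt10Aux.cv_mem k)
        obtain ⟨ω, hω, hcode⟩ := Stmt10Aux.exists_code hU hD hz hf
        exact ⟨(f, ω), ⟨hfF, hω⟩, hcode⟩
end

section
/- Suppose F ⊆ ℝ^d tiles ℝ^d by an additive subgroup Γ of ℤ^d of finite index N, in the sense that for every y ∈ ℝ^d there is exactly one γ ∈ Γ with y − γ ∈ F. Then for every point s ∈ S_A, the fiber {(x, ω) ∈ F × Ω : 𝔡(x, ω) = s} has exactly N elements. -/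
open Matrix MeasureTheory Filter Topology

section Aux

namespace S11

variable {d : ℕ}

/-- Cast of integer vectors to real vectors. -/
def ic (k : Fin d → ℤ) : Fin d → ℝ := fun i => (k i : ℝ)

lemma ic_injective : Function.Injective (ic (d := d)) := by
  intro a b h
  funext i
  have := congrFun h i
  simp only [ic] at this
  exact_mod_cast this

lemma ic_sub (a b : Fin d → ℤ) : ic (a - b) = ic a - ic b := by
  funext i; simp [ic]

lemma ic_neg (a : Fin d → ℤ) : ic (-a) = -ic a := by
  funext i; simp [ic]

lemma mem_intLattice {x : Fin d → ℝ} : x ∈ intLattice d ↔ ∃ k, x = ic k := by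
  constructor
  · intro h
    choose k hk using h
    exact ⟨k, funext hk⟩
  · rintro ⟨k, rfl⟩ i
    exact ⟨k i, rfl⟩

lemma torusMk_eq_iff {x y : Fin d → ℝ} :
    torusMk d x = torusMk d y ↔ ∃ k : Fin d → ℤ, x - y = ic k := by
  rw [show torusMk d x = (x : Torus d) from rfl, show torusMk d y = (y : Torus d) from rfl,
    QuotientAddGroup.eq_iff_sub_mem, mem_intLattice]

lemma ic_mulVec (M : Matrix (Fin d) (Fin d) ℤ) (k : Fin d → ℤ) :
    (toR M).mulVec (ic k) = ic (M.mulVec k) := by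
  funext i
  simp only [toR, ic, Matrix.mulVec, dotProduct, Matrix.map_apply]
  push_cast
  rfl

lemma torusHom_mk (M : Matrix (Fin d) (Fin d) ℤ) (x : Fin d → ℝ) :
    torusHom M (torusMk d x) = torusMk d ((toR M).mulVec x) :=
  QuotientAddGroup.map_mk' _ _ _ _ _

lemma toR_transpose (M : Matrix (Fin d) (Fin d) ℤ) : toR Mᵀ = (toR M)ᵀ := by
  funext i j; rfl

/-- Expansive matrices have invertible real transpose. -/
lemma expansive_isUnit_det {A : Matrix (Fin d) (Fin d) ℤ} (hA : Expansive A) :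
    IsUnit ((toR A)ᵀ).det := by
  have hC : (A.map (Int.cast : ℤ → ℂ)).det ≠ 0 := by
    intro h0
    have hr : (Matrix.charpoly (A.map (Int.cast : ℤ → ℂ))).IsRoot 0 := by
      have h := Matrix.det_eq_sign_charpoly_coeff (A.map (Int.cast : ℤ → ℂ))
      rw [h0] at h
      have hc : (Matrix.charpoly (A.map (Int.cast : ℤ → ℂ))).coeff 0 = 0 := by
        rcases mul_eq_zero.mp h.symm with h' | h'
        · exact absurd h' (pow_ne_zero _ (by norm_num : (-1:ℂ) ≠ 0))
        · exact h'
      simpa [Polynomial.IsRoot, Polynomial.coeff_zero_eq_eval_zero] using hc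
    have h1 := hA 0 hr
    simp only [norm_zero] at h1
    exact absurd h1 (by norm_num)
  have hZ : A.det ≠ 0 := by
    intro h
    apply hC
    have := RingHom.map_det (Int.castRingHom ℂ) A
    rw [h] at this
    simpa using this.symm
  have hR : (toR A).det ≠ 0 := by
    have h1 : ((A.det : ℝ)) = (A.map (Int.cast : ℤ → ℝ)).det :=
      RingHom.map_det (Int.castRingHom ℝ) A
    intro h
    rw [toR] at h
    rw [h] at h1
    exact hZ (by exact_mod_cast h1)
  rw [Matrix.det_transpose]
  exact isUnit_iff_ne_zero.mpr hR

variable {A : Matrix (Fin d) (Fin d) ℤ} {D : Set (Fin d → ℤ)} {s : ℕ → Torus d}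

/-- The key step: given a lift `y` of `t`, there is a unique digit `v ∈ D`
moving it to a lift of `u`, provided `torusHom Aᵀ u = t`. -/
lemma step_exu (hB : IsUnit ((toR A)ᵀ).det) (hD : CompleteDigits A D)
    {y : Fin d → ℝ} {t u : Torus d} (hy : torusMk d y = t) (ht : torusHom Aᵀ u = t) :
    ∃! v : Fin d → ℤ, v ∈ D ∧ torusMk d (tauD A v y) = u := by
  have cancel1 : ∀ w : Fin d → ℝ, ((toR A)ᵀ).mulVec ((((toR A)ᵀ)⁻¹).mulVec w) = w := by
    intro w
    rw [Matrix.mulVec_mulVec, Matrix.mul_nonsing_inv _ hB, Matrix.one_mulVec]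
  have cancel2 : ∀ w : Fin d → ℝ, (((toR A)ᵀ)⁻¹).mulVec (((toR A)ᵀ).mulVec w) = w := by
    intro w
    rw [Matrix.mulVec_mulVec, Matrix.nonsing_inv_mul _ hB, Matrix.one_mulVec]
  obtain ⟨z, hz'⟩ := QuotientAddGroup.mk'_surjective (intLattice d) u
  have hz : torusMk d z = u := hz'
  have hmz : torusMk d (((toR A)ᵀ).mulVec z) = torusMk d y := by
    rw [← toR_transpose, ← torusHom_mk, hz, ht, hy]
  obtain ⟨m, hm⟩ := torusMk_eq_iff.mp hmz
  have hm' : ((toR A)ᵀ).mulVec z = y + ic m := by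
    rw [eq_add_of_sub_eq hm]; exact add_comm _ _
  have htau : ∀ v : Fin d → ℤ, tauD A v y = (((toR A)ᵀ)⁻¹).mulVec (y + ic v) := fun v => rfl
  have key : ∀ v : Fin d → ℤ,
      (torusMk d (tauD A v y) = u ↔ ∃ k : Fin d → ℤ, m - v = Aᵀ.mulVec k) := by
    intro v
    rw [← hz, torusMk_eq_iff]
    constructor
    · rintro ⟨k, hk⟩
      refine ⟨-k, ?_⟩
      have h1 : tauD A v y = ic k + z := (sub_eq_iff_eq_add.mp hk)
      have h2 : y + ic v = ((toR A)ᵀ).mulVec (ic k + z) := by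
        calc y + ic v = ((toR A)ᵀ).mulVec ((((toR A)ᵀ)⁻¹).mulVec (y + ic v)) :=
              (cancel1 _).symm
        _ = ((toR A)ᵀ).mulVec (ic k + z) := by rw [← htau, h1]
      rw [Matrix.mulVec_add, hm', ← toR_transpose, ic_mulVec] at h2
      -- h2 : y + ic v = ic (Aᵀ.mulVec k) + (y + ic m)
      apply ic_injective
      rw [ic_sub, Matrix.mulVec_neg, ic_neg]
      have h3 : ic v = ic (Aᵀ.mulVec k) + ic m := by
        have := h2
        rw [show ic (Aᵀ.mulVec k) + (y + ic m) = y + (ic (Aᵀ.mulVec k) + ic m) by ring] at this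
        exact add_left_cancel this
      rw [h3]; ring
    · rintro ⟨k, hk⟩
      refine ⟨-k, ?_⟩
      have h1 : y + ic v = ((toR A)ᵀ).mulVec (z - ic k) := by
        rw [Matrix.mulVec_sub, hm', ← toR_transpose, ic_mulVec, ← hk, ic_sub]
        ring
      rw [htau, h1, cancel2, ic_neg]
      ring
  obtain ⟨v, ⟨hvD, hvk⟩, hvu⟩ := hD m
  exact ⟨v, ⟨hvD, (key v).mpr hvk⟩, fun w ⟨hwD, hw⟩ => hvu w ⟨hwD, (key w).mp hw⟩⟩

open Classical in
noncomputable def nxt (A : Matrix (Fin d) (Fin d) ℤ) (D : Set (Fin d → ℤ))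
    (s : ℕ → Torus d) (n : ℕ) (y : Fin d → ℝ) : Fin d → ℤ :=
  if h : ∃ v, v ∈ D ∧ torusMk d (tauD A v y) = s (n+1) then h.choose else 0

noncomputable def seqx (A : Matrix (Fin d) (Fin d) ℤ) (D : Set (Fin d → ℤ))
    (s : ℕ → Torus d) (x : Fin d → ℝ) : ℕ → Fin d → ℝ
  | 0 => x
  | n+1 => tauD A (nxt A D s n (seqx A D s x n)) (seqx A D s x n)

lemma seqx_inv (hB : IsUnit ((toR A)ᵀ).det) (hD : CompleteDigits A D)
    (hs : ∀ n, torusHom Aᵀ (s (n+1)) = s n) {x : Fin d → ℝ} (hx : torusMk d x = s 0) :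
    ∀ n, torusMk d (seqx A D s x n) = s n := by
  intro n
  induction n with
  | zero => exact hx
  | succ n ih =>
    obtain ⟨v, ⟨hvD, hv⟩, _⟩ := step_exu hB hD ih (hs n)
    have hex : ∃ v, v ∈ D ∧ torusMk d (tauD A v (seqx A D s x n)) = s (n+1) := ⟨v, hvD, hv⟩
    show torusMk d (tauD A (nxt A D s n (seqx A D s x n)) (seqx A D s x n)) = s (n+1)
    rw [nxt, dif_pos hex]
    exact hex.choose_spec.2

lemma nxt_mem (hB : IsUnit ((toR A)ᵀ).det) (hD : CompleteDigits A D)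
    (hs : ∀ n, torusHom Aᵀ (s (n+1)) = s n) {x : Fin d → ℝ} (hx : torusMk d x = s 0)
    (n : ℕ) : nxt A D s n (seqx A D s x n) ∈ D := by
  have ih := seqx_inv hB hD hs hx n
  obtain ⟨v, ⟨hvD, hv⟩, _⟩ := step_exu hB hD ih (hs n)
  have hex : ∃ v, v ∈ D ∧ torusMk d (tauD A v (seqx A D s x n)) = s (n+1) := ⟨v, hvD, hv⟩
  rw [nxt, dif_pos hex]
  exact hex.choose_spec.1

/-- For any lift `x` of `s 0`, there is a unique admissible digit sequence coding `s`. -/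
lemma omega_exu (hB : IsUnit ((toR A)ᵀ).det) (hD : CompleteDigits A D)
    (hs : ∀ n, torusHom Aᵀ (s (n+1)) = s n) {x : Fin d → ℝ} (hx : torusMk d x = s 0) :
    ∃! ω : ℕ → Fin d → ℤ, (∀ n, ω n ∈ D) ∧ codeMap A x ω = s := by
  set ω0 : ℕ → Fin d → ℤ := fun n => nxt A D s n (seqx A D s x n) with hω0
  have htw : ∀ n, tauWord A ω0 n x = seqx A D s x n := by
    intro n
    induction n with
    | zero => rfl
    | succ n ih =>
      show tauD A (ω0 n) (tauWord A ω0 n x) = _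
      rw [ih]
      rfl
  refine ⟨ω0, ⟨fun n => nxt_mem hB hD hs hx n, ?_⟩, ?_⟩
  · funext n
    show torusMk d (tauWord A ω0 n x) = s n
    rw [htw]
    exact seqx_inv hB hD hs hx n
  · rintro ω ⟨hωD, hωc⟩
    have main : ∀ n, tauWord A ω n x = seqx A D s x n ∧ ω n = ω0 n := by
      intro n
      induction n with
      | zero =>
        refine ⟨rfl, ?_⟩
        have h1 : torusMk d (tauD A (ω 0) x) = s 1 := congrFun hωc 1
        have h2 : torusMk d (tauD A (ω0 0) x) = s 1 := by
          have := seqx_inv hB hD hs hx 1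
          exact this
        exact (step_exu hB hD hx (hs 0)).unique ⟨hωD 0, h1⟩ ⟨nxt_mem hB hD hs hx 0, h2⟩
      | succ n ih =>
        have hstep : tauWord A ω (n+1) x = seqx A D s x (n+1) := by
          show tauD A (ω n) (tauWord A ω n x) = _
          rw [ih.1, ih.2]
          rfl
        refine ⟨hstep, ?_⟩
        have hy : torusMk d (seqx A D s x (n+1)) = s (n+1) := seqx_inv hB hD hs hx (n+1)
        have h1 : torusMk d (tauD A (ω (n+1)) (seqx A D s x (n+1))) = s (n+2) := by
          have := congrFun hωc (n+2)
          show _ = s (n+2)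
          rw [← hstep]
          exact this
        have h2 : torusMk d (tauD A (ω0 (n+1)) (seqx A D s x (n+1))) = s (n+2) := by
          have := seqx_inv hB hD hs hx (n+2)
          exact this
        exact (step_exu hB hD hy (hs (n+1))).unique ⟨hωD (n+1), h1⟩
          ⟨nxt_mem hB hD hs hx (n+1), h2⟩
    funext n
    exact (main n).2

end S11

end Aux

/-- if F tiles ℝ^d by a subgroup Γ ⊆ ℤ^d of finite index N, then
every fiber of 𝔡 restricted to F × Ω over a point of the solenoid has exactly
N elements. -/
theorem statement11 (d : ℕ) (hd : 0 < d) (A : Matrix (Fin d) (Fin d) ℤ)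
    (hA : Expansive A) (D : Set (Fin d → ℤ)) (hD : CompleteDigits A D)
    (Γ : AddSubgroup (Fin d → ℤ)) (N : ℕ) (hNpos : 0 < N) (hN : Γ.index = N)
    (F : Set (Fin d → ℝ))
    (htile : ∀ y : Fin d → ℝ, ∃! γ : Fin d → ℤ, γ ∈ Γ ∧
      (y - fun i => (γ i : ℝ)) ∈ F)
    (s : ℕ → Torus d) (hs : s ∈ solenoid A) :
    Nat.card {q : (Fin d → ℝ) × (ℕ → Fin d → ℤ) //
      q.1 ∈ F ∧ (∀ n, q.2 n ∈ D) ∧ codeMap A q.1 q.2 = s} = N := by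
  classical
  have hB := S11.expansive_isUnit_det hA
  have hs' : ∀ n, torusHom Aᵀ (s (n + 1)) = s n := hs
  obtain ⟨x0, hx0'⟩ := QuotientAddGroup.mk'_surjective (intLattice d) (s 0)
  have hx0 : torusMk d x0 = s 0 := hx0'
  have step1 : Nat.card {q : (Fin d → ℝ) × (ℕ → Fin d → ℤ) //
      q.1 ∈ F ∧ (∀ n, q.2 n ∈ D) ∧ codeMap A q.1 q.2 = s}
      = Nat.card {x : Fin d → ℝ // x ∈ F ∧ torusMk d x = s 0} := by
    apply Nat.card_eq_of_bijective (fun q =>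
      (⟨q.1.1, q.2.1, congrFun q.2.2.2 0⟩ : {x : Fin d → ℝ // x ∈ F ∧ torusMk d x = s 0}))
    constructor
    · rintro ⟨⟨x, ω⟩, hxF, hωD, hωc⟩ ⟨⟨x', ω'⟩, hxF', hωD', hωc'⟩ h
      have hx : x = x' := congrArg Subtype.val h
      subst hx
      have hmk : torusMk d x = s 0 := congrFun hωc 0
      have hωω := (S11.omega_exu hB hD hs' hmk).unique ⟨hωD, hωc⟩ ⟨hωD', hωc'⟩
      exact Subtype.ext (Prod.ext rfl hωω)
    · rintro ⟨x, hxF, hxs⟩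
      obtain ⟨ω, ⟨hωD, hωc⟩, -⟩ := S11.omega_exu hB hD hs' hxs
      exact ⟨⟨(x, ω), hxF, hωD, hωc⟩, rfl⟩
  rw [step1]
  have hk : ∀ x : {x : Fin d → ℝ // x ∈ F ∧ torusMk d x = s 0},
      ∃ k : Fin d → ℤ, x.1 - x0 = S11.ic k := fun x =>
    S11.torusMk_eq_iff.mp (by rw [x.2.2, hx0])
  choose kf hkf using hk
  have hrep : ∀ x : {x : Fin d → ℝ // x ∈ F ∧ torusMk d x = s 0},
      x.1 = S11.ic (kf x) + x0 := fun x => eq_add_of_sub_eq (hkf x)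
  have step2 : Nat.card {x : Fin d → ℝ // x ∈ F ∧ torusMk d x = s 0}
      = Nat.card ((Fin d → ℤ) ⧸ Γ) := by
    apply Nat.card_eq_of_bijective (fun x => ((kf x : Fin d → ℤ) : (Fin d → ℤ) ⧸ Γ))
    constructor
    · rintro x x' h
      have hγ : kf x - kf x' ∈ Γ := QuotientAddGroup.eq_iff_sub_mem.mp h
      have h1 : (0 : Fin d → ℤ) ∈ Γ ∧ (x.1 - fun i => (((0 : Fin d → ℤ) i : ℝ))) ∈ F := by
        refine ⟨zero_mem Γ, ?_⟩
        have : (x.1 - fun i => (((0 : Fin d → ℤ) i : ℝ))) = x.1 := by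
          funext i; simp
        rw [this]
        exact x.2.1
      have h2 : (kf x - kf x') ∈ Γ ∧
          (x.1 - fun i => (((kf x - kf x') i : ℝ))) ∈ F := by
        refine ⟨hγ, ?_⟩
        have : (x.1 - fun i => (((kf x - kf x') i : ℝ))) = x'.1 := by
          have e1 := hrep x
          have e2 := hrep x'
          have : (fun i => (((kf x - kf x') i : ℝ))) = S11.ic (kf x - kf x') := rfl
          rw [this, S11.ic_sub, e1, e2]
          ring
        rw [this]
        exact x'.2.1
      have h0 : (0 : Fin d → ℤ) = kf x - kf x' := by
        obtain ⟨γ0, _, huniq⟩ := htile x.1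
        rw [huniq 0 h1, ← huniq (kf x - kf x') h2]
      have hkk : kf x = kf x' := by
        have := h0.symm
        rwa [sub_eq_zero] at this
      apply Subtype.ext
      rw [hrep x, hrep x', hkk]
    · intro b
      obtain ⟨r, rfl⟩ := QuotientAddGroup.mk_surjective b
      obtain ⟨γ, ⟨hγΓ, hγF⟩, -⟩ := htile (x0 + S11.ic r)
      have hxF : (x0 + S11.ic r - S11.ic γ) ∈ F := hγF
      have hmk : torusMk d (x0 + S11.ic r - S11.ic γ) = s 0 := by
        rw [← hx0]
        apply S11.torusMk_eq_iff.mpr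
        exact ⟨r - γ, by rw [S11.ic_sub]; ring⟩
      refine ⟨⟨x0 + S11.ic r - S11.ic γ, hxF, hmk⟩, ?_⟩
      have hic : S11.ic (kf ⟨x0 + S11.ic r - S11.ic γ, hxF, hmk⟩) = S11.ic (r - γ) := by
        rw [← hkf ⟨x0 + S11.ic r - S11.ic γ, hxF, hmk⟩, S11.ic_sub]
        show x0 + S11.ic r - S11.ic γ - x0 = _
        ring
      have hkeq : kf ⟨x0 + S11.ic r - S11.ic γ, hxF, hmk⟩ = r - γ := S11.ic_injective hic
      apply QuotientAddGroup.eq_iff_sub_mem.mpr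
      rw [hkeq]
      have : r - γ - r = -γ := by ring
      rw [this]
      exact neg_mem hγΓ
  rw [step2, ← AddSubgroup.index_eq_card, hN]
end

section
/- Assume (A, D) satisfies the tiling condition. Define ρ : ℝ^d × Ω → ℝ^d × Ω by ρ(x, ω₀ω₁ω₂…) = (τ_{ω₀}(x), ω₁ω₂…). Then ρ maps X(A^T,D) × Ω onto X(A^T,D) × Ω, and ρ is injective on X(A^T,D) × Ω almost everywhere, in the sense that the set of points x ∈ X(A^T,D) for which there exist x' ∈ X(A^T,D) and ω, ω' ∈ Ω with (x, ω) ≠ (x', ω') and ρ(x, ω) = ρ(x', ω') has d-dimensional Lebesgue measure zero. -/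
open Matrix MeasureTheory Filter Topology

/-- The tiling condition: X(Aᵀ,D) tiles ℝ^d by ℤ^d up to Lebesgue-null sets. -/
def TilingCondition (d : ℕ) (A : Matrix (Fin d) (Fin d) ℤ) (D : Set (Fin d → ℤ)) : Prop :=
  volume (Set.univ \ ⋃ k : Fin d → ℤ,
      (fun y => y + fun i => (k i : ℝ)) '' attractor d A D) = 0 ∧
  ∀ k k' : Fin d → ℤ, k ≠ k' →
    volume (((fun y => y + fun i => (k i : ℝ)) '' attractor d A D) ∩
      ((fun y => y + fun i => (k' i : ℝ)) '' attractor d A D)) = 0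

/-- The map ρ(x, ω₀ω₁ω₂…) = (τ_{ω₀}(x), ω₁ω₂…). -/
noncomputable def rhoMap {d : ℕ} (A : Matrix (Fin d) (Fin d) ℤ)
    (q : (Fin d → ℝ) × (ℕ → Fin d → ℤ)) : (Fin d → ℝ) × (ℕ → Fin d → ℤ) :=
  (tauD A (q.2 0) q.1, fun n => q.2 (n + 1))

lemma expansive_det_isUnit {d : ℕ} (A : Matrix (Fin d) (Fin d) ℤ) (hA : Expansive A) :
    IsUnit (toR A).det := by
  have hz : (A.map (Int.cast : ℤ → ℂ)).det ≠ 0 := by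
    intro h0
    have hroot : (Matrix.charpoly (A.map (Int.cast : ℤ → ℂ))).IsRoot 0 := by
      have h1 := Matrix.det_eq_sign_charpoly_coeff (A.map (Int.cast : ℤ → ℂ))
      rw [h0] at h1
      have hne : ((-1 : ℂ) ^ (Fintype.card (Fin d))) ≠ 0 := by simp
      have hc : (Matrix.charpoly (A.map (Int.cast : ℤ → ℂ))).coeff 0 = 0 := by
        exact (mul_eq_zero.mp h1.symm).resolve_left hne
      simpa [Polynomial.IsRoot, ← Polynomial.coeff_zero_eq_eval_zero] using hc
    have := hA 0 hroot
    norm_num at this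
  have hint : A.det ≠ 0 := by
    intro h
    apply hz
    have h2 : ((Int.castRingHom ℂ).mapMatrix A).det = (Int.castRingHom ℂ) A.det :=
      (RingHom.map_det (Int.castRingHom ℂ) A).symm
    simp only [RingHom.mapMatrix_apply] at h2
    rw [show (A.map (Int.cast : ℤ → ℂ)) = A.map (Int.castRingHom ℂ) from rfl, h2, h]
    simp
  have h3 : (toR A).det = ((A.det : ℤ) : ℝ) := by
    have h4 : ((Int.castRingHom ℝ).mapMatrix A).det = (Int.castRingHom ℝ) A.det :=
      (RingHom.map_det (Int.castRingHom ℝ) A).symm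
    simpa [toR, RingHom.mapMatrix_apply] using h4
  rw [h3]
  simp [isUnit_iff_ne_zero, hint]

/-- under the tiling condition, ρ maps X(Aᵀ,D) × Ω onto itself
and is injective up to a Lebesgue-null set of first coordinates. -/
theorem statement12 (d : ℕ) (hd : 0 < d) (A : Matrix (Fin d) (Fin d) ℤ)
    (hA : Expansive A) (D : Set (Fin d → ℤ)) (hD : CompleteDigits A D)
    (htile : TilingCondition d A D) :
    (attractor d A D ×ˢ {ω : ℕ → Fin d → ℤ | ∀ n, ω n ∈ D} ⊆
      rhoMap A '' (attractor d A D ×ˢ {ω : ℕ → Fin d → ℤ | ∀ n, ω n ∈ D})) ∧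
    volume {x : Fin d → ℝ | x ∈ attractor d A D ∧
      ∃ x' ∈ attractor d A D, ∃ ω ω' : ℕ → Fin d → ℤ,
        (∀ n, ω n ∈ D) ∧ (∀ n, ω' n ∈ D) ∧ (x, ω) ≠ (x', ω') ∧
        rhoMap A (x, ω) = rhoMap A (x', ω')} = 0 := by
  classical
  have hdetA : IsUnit (toR A).det := expansive_det_isUnit A hA
  set B : Matrix (Fin d) (Fin d) ℝ := (toR A)ᵀ with hBdef
  have hdet : IsUnit B.det := by rwa [hBdef, Matrix.det_transpose]
  set M : Matrix (Fin d) (Fin d) ℝ := B⁻¹ with hMdef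
  have hBM : B * M = 1 := Matrix.mul_nonsing_inv B hdet
  have hMB : M * B = 1 := Matrix.nonsing_inv_mul B hdet
  have hBcancel : ∀ v : Fin d → ℝ, B.mulVec (M.mulVec v) = v := by
    intro v; rw [Matrix.mulVec_mulVec, hBM, Matrix.one_mulVec]
  have hMcancel : ∀ v : Fin d → ℝ, M.mulVec (B.mulVec v) = v := by
    intro v; rw [Matrix.mulVec_mulVec, hMB, Matrix.one_mulVec]
  constructor
  · -- onto
    rintro ⟨y, ω⟩ ⟨hy, hω⟩
    obtain ⟨dig, hdig, hsum⟩ := hy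
    set f : ℕ → Fin d → ℝ := fun j => (M ^ (j + 1)).mulVec fun i => (dig j i : ℝ) with hfdef
    have hsum' : HasSum (fun j => f (j + 1)) (y - f 0) := by
      refine (hasSum_nat_add_iff 1).mpr ?_
      simpa [Finset.sum_range_one, sub_add_cancel] using hsum
    have hcont : Continuous (B.mulVecLin : (Fin d → ℝ) →ₗ[ℝ] (Fin d → ℝ)) :=
      LinearMap.continuous_of_finiteDimensional _
    have hsum2 : HasSum (fun j => B.mulVec (f (j + 1))) (B.mulVec (y - f 0)) := by
      have := hsum'.map B.mulVecLin.toAddMonoidHom hcont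
      simpa [Function.comp_def] using this
    set x : Fin d → ℝ := B.mulVec (y - f 0) with hxdef
    have hkey : ∀ j : ℕ, B.mulVec (f (j + 1)) =
        (M ^ (j + 1)).mulVec fun i => ((dig (j + 1)) i : ℝ) := by
      intro j
      rw [hfdef]
      simp only
      rw [Matrix.mulVec_mulVec, show M ^ (j + 1 + 1) = M * M ^ (j + 1) from pow_succ' M (j+1),
        ← mul_assoc, hBM, one_mul]
    have hx : x ∈ attractor d A D := by
      refine ⟨fun j => dig (j + 1), fun j => hdig (j + 1), ?_⟩
      rw [hxdef]
      exact HasSum.congr_fun hsum2 (fun j => (hkey j).symm)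
    set ω' : ℕ → Fin d → ℤ := fun n => Nat.rec (dig 0) (fun k _ => ω k) n with hω'def
    have hω' : ∀ n, ω' n ∈ D := by
      intro n; cases n with
      | zero => exact hdig 0
      | succ k => exact hω k
    refine ⟨(x, ω'), ⟨hx, hω'⟩, ?_⟩
    have hBf0 : B.mulVec (f 0) = fun i => ((dig 0) i : ℝ) := by
      have hf0 : f 0 = M.mulVec fun i => ((dig 0) i : ℝ) := by
        simp only [hfdef, zero_add, pow_one]
      rw [hf0]
      exact hBcancel _
    have hxval : x + (fun i => ((dig 0) i : ℝ)) = B.mulVec y := by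
      rw [hxdef, Matrix.mulVec_sub, hBf0]
      abel
    have htau : tauD A (ω' 0) x = y := by
      show M.mulVec (x + fun i => ((dig 0) i : ℝ)) = y
      rw [hxval, hMcancel]
    refine Prod.ext ?_ ?_
    · exact htau
    · rfl
  · -- a.e. injectivity
    have hsub : {x : Fin d → ℝ | x ∈ attractor d A D ∧
        ∃ x' ∈ attractor d A D, ∃ ω ω' : ℕ → Fin d → ℤ,
          (∀ n, ω n ∈ D) ∧ (∀ n, ω' n ∈ D) ∧ (x, ω) ≠ (x', ω') ∧
          rhoMap A (x, ω) = rhoMap A (x', ω')} ⊆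
        ⋃ k : {k : Fin d → ℤ // k ≠ 0},
          (((fun y => y + fun i => (((0 : Fin d → ℤ)) i : ℝ)) '' attractor d A D) ∩
            ((fun y => y + fun i => ((k : Fin d → ℤ) i : ℝ)) '' attractor d A D)) := by
      rintro x ⟨hx, x', hx', ω, ω', hω, hω', hne, heq⟩
      have h1 : tauD A (ω 0) x = tauD A (ω' 0) x' := congrArg Prod.fst heq
      have h2 : (fun n => ω (n + 1)) = (fun n => ω' (n + 1)) := congrArg Prod.snd heq
      have hxx : x + (fun i => ((ω 0) i : ℝ)) = x' + (fun i => ((ω' 0) i : ℝ)) := by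
        have := congrArg B.mulVec h1
        unfold tauD at this
        rw [hBcancel, hBcancel] at this
        exact this
      set k : Fin d → ℤ := ω' 0 - ω 0 with hkdef
      have hk : x = x' + fun i => (k i : ℝ) := by
        funext i
        have := congrFun hxx i
        simp only [Pi.add_apply, hkdef, Pi.sub_apply] at this ⊢
        push_cast
        linarith
      have hkne : k ≠ 0 := by
        intro h0
        have hω0 : ω' 0 = ω 0 := by
          have := sub_eq_zero.mp (hkdef ▸ h0)
          exact this
        have hxeq : x = x' := by
          funext i
          rw [congrFun hk i, h0]
          simp
        have hωeq : ω = ω' := by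
          funext n
          cases n with
          | zero => exact hω0.symm
          | succ m => exact congrFun h2 m
        exact hne (Prod.ext hxeq hωeq)
      refine Set.mem_iUnion.mpr ⟨⟨k, hkne⟩, ?_, ?_⟩
      · exact ⟨x, hx, by funext i; simp⟩
      · exact ⟨x', hx', hk.symm⟩
    refine measure_mono_null hsub (measure_iUnion_null ?_)
    rintro ⟨k, hk⟩
    exact htile.2 0 k (fun h => hk h.symm)
end
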